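/- arXiv:2207.10908 — 5 statements merged into one kernel-verified Lean document; each statement's English description precedes it below -/
import Mathlib

section
/- An admissible curve on a junction decomposes its velocity along the edges: if y ∈ W^{1,2}([0,T];𝒢) is an admissible curve on the junction 𝒢 = ⋃_{i=1}^N ℝ⁺ e_i, then for almost every s ∈ [0,T], ẏ(s) = Σ_{i=1}^N 1_{\{y(s) ∈ J_i \setminus \{O\}\}} (ẏ(s)·e_i) e_i; in particular, for a.e. s with y(s) ∈ J_i \ {O}, the velocity ẏ(s) is a scalar multiple of e_i. -/
open Set MeasureTheory Filter intervalIntegral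
open scoped Topology ENNReal

section Helpers
variable {E : Type*} [NormedAddCommGroup E] [NormedSpace ℝ E]

lemma aux_avg_bound [CompleteSpace E] {f : ℝ → E} (hf : Integrable f (volume : Measure ℝ))
    (c : E) {a b : ℝ} (hab : a < b) :
    ‖(b - a)⁻¹ • (∫ t in a..b, f t) - c‖ ≤ ⨍ t in Icc a b, ‖f t - c‖ := by
  have hba : 0 < b - a := sub_pos.2 hab
  have h1 : (∫ t in a..b, (f t - c)) = (∫ t in a..b, f t) - (b - a) • c := by
    rw [intervalIntegral.integral_sub hf.intervalIntegrable intervalIntegrable_const,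
      intervalIntegral.integral_const]
  have h2 : (b - a)⁻¹ • (∫ t in a..b, f t) - c
      = (b - a)⁻¹ • (∫ t in a..b, (f t - c)) := by
    rw [h1, smul_sub, smul_smul, inv_mul_cancel₀ hba.ne', one_smul]
  rw [h2]
  have h3 : ‖(∫ t in a..b, (f t - c))‖ ≤ ∫ t in Ioc a b, ‖f t - c‖ := by
    rw [intervalIntegral.integral_of_le hab.le]
    exact norm_integral_le_integral_norm _
  have h4 : (⨍ t in Icc a b, ‖f t - c‖) = (b - a)⁻¹ * ∫ t in Ioc a b, ‖f t - c‖ := by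
    rw [setAverage_eq, Real.volume_real_Icc_of_le hab.le, smul_eq_mul,
      ← integral_Icc_eq_integral_Ioc]
  rw [h4, norm_smul, Real.norm_eq_abs, abs_of_pos (inv_pos.2 hba)]
  exact mul_le_mul_of_nonneg_left h3 (inv_pos.2 hba).le

lemma aux_ftc_leb [CompleteSpace E] {f : ℝ → E} (hf : Integrable f (volume : Measure ℝ)) :
    ∀ᵐ x ∂(volume : Measure ℝ), HasDerivAt (fun z => ∫ t in (0:ℝ)..z, f t) (f x) x := by
  have hloc : LocallyIntegrable f volume := hf.locallyIntegrable
  have hV := (IsUnifLocDoublingMeasure.vitaliFamily (volume : Measure ℝ) 1).ae_tendsto_average_norm_sub hloc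
  filter_upwards [hV] with x hx
  set F : ℝ → E := fun z => ∫ t in (0:ℝ)..z, f t with hF
  rw [hasDerivAt_iff_tendsto_slope, ← nhdsLT_sup_nhdsGT, tendsto_sup]
  have hsub : ∀ a b : ℝ, F b - F a = ∫ t in a..b, f t := fun a b =>
    intervalIntegral.integral_interval_sub_left hf.intervalIntegrable hf.intervalIntegrable
  constructor
  · -- left limit
    have havg : Tendsto (fun z => ⨍ t in Icc z x, ‖f t - f x‖) (𝓝[<] x) (𝓝 0) :=
      hx.comp (Real.tendsto_Icc_vitaliFamily_left x)
    rw [tendsto_iff_norm_sub_tendsto_zero]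
    refine squeeze_zero' (Eventually.of_forall fun z => norm_nonneg _) ?_ havg
    filter_upwards [self_mem_nhdsWithin] with z (hz : z < x)
    have h1 : slope F x z = (x - z)⁻¹ • (∫ t in z..x, f t) := by
      rw [slope_comm, slope_def_module, hsub]
    rw [h1]
    exact aux_avg_bound hf (f x) hz
  · have havg : Tendsto (fun z => ⨍ t in Icc x z, ‖f t - f x‖) (𝓝[>] x) (𝓝 0) :=
      hx.comp (Real.tendsto_Icc_vitaliFamily_right x)
    rw [tendsto_iff_norm_sub_tendsto_zero]
    refine squeeze_zero' (Eventually.of_forall fun z => norm_nonneg _) ?_ havg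
    filter_upwards [self_mem_nhdsWithin] with z (hz : x < z)
    have h1 : slope F x z = (z - x)⁻¹ • (∫ t in x..z, f t) := by
      rw [slope_def_module, hsub]
    rw [h1]
    exact aux_avg_bound hf (f x) hz

end Helpers

/-- The velocity of an admissible curve on the junction decomposes along the edges:
a.e. `ẏ(s) = ∑ i 1_{y(s) ∈ Jᵢ \ {O}} (ẏ(s)·eᵢ) eᵢ`; in particular the velocity is a
scalar multiple of `eᵢ` whenever `y(s) ∈ Jᵢ \ {O}`. -/
theorem stmt_4 {d N : ℕ} (T : ℝ) (hT : 0 < T)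
    (e : Fin (N + 1) → EuclideanSpace ℝ (Fin d))
    (he : ∀ i, ‖e i‖ = 1) (hinj : Function.Injective e)
    (J : Fin (N + 1) → Set (EuclideanSpace ℝ (Fin d)))
    (hJ : ∀ i, J i = {p | ∃ r : ℝ, 0 ≤ r ∧ p = r • e i})
    (G : Set (EuclideanSpace ℝ (Fin d)))
    (hG : G = ⋃ i, J i)
    (y α : ℝ → EuclideanSpace ℝ (Fin d))
    (hα : MemLp α 2 (volume.restrict (Icc (0 : ℝ) T)))
    (hy : ∀ s ∈ Icc (0 : ℝ) T, (y s = y 0 + ∫ τ in (0 : ℝ)..s, α τ) ∧ y s ∈ G) :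
    (∀ᵐ s ∂(volume.restrict (Icc (0 : ℝ) T)),
      α s = ∑ i : Fin (N + 1),
        (J i \ {0}).indicator (fun _ => ((inner ℝ (α s) (e i) : ℝ)) • e i) (y s)) ∧
    (∀ᵐ s ∂(volume.restrict (Icc (0 : ℝ) T)),
      ∀ i, y s ∈ J i \ {0} → ∃ c : ℝ, α s = c • e i) := by
  set μ := volume.restrict (Icc (0 : ℝ) T) with hμ
  -- basic facts about the edges
  have hinner : ∀ (i) (r : ℝ), (inner ℝ (r • e i) (e i) : ℝ) = r := by
    intro i r
    rw [real_inner_smul_left, real_inner_self_eq_norm_mul_norm, he i]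
    ring
  have hmemJ : ∀ i p, p ∈ J i ↔ ∃ r : ℝ, 0 ≤ r ∧ p = r • e i := by
    intro i p; rw [hJ i]; rfl
  have huniq : ∀ (p) (i j), p ≠ 0 → p ∈ J i → p ∈ J j → i = j := by
    intro p i j hp hi hj
    obtain ⟨r, hr, rfl⟩ := (hmemJ i p).1 hi
    obtain ⟨r', hr', hrr'⟩ := (hmemJ j _).1 hj
    have hr0 : r ≠ 0 := by rintro rfl; simp at hp
    have hrpos : 0 < r := lt_of_le_of_ne hr (Ne.symm hr0)
    have hnorm : r = r' := by
      have h1 : ‖r • e i‖ = r := by rw [norm_smul, he i, Real.norm_eq_abs, abs_of_pos hrpos]; ring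
      have h2 : ‖r' • e j‖ = r' := by
        rw [norm_smul, he j, Real.norm_eq_abs, abs_of_nonneg hr']; ring
      rw [← h1, hrr', h2]
    apply hinj
    have := hrr'
    rw [← hnorm] at this
    exact smul_right_injective _ hr0 this
  have hJclosed : ∀ i, IsClosed (J i) := by
    intro i
    have : J i = {p : EuclideanSpace ℝ (Fin d) | 0 ≤ (inner ℝ p (e i) : ℝ)} ∩
        {p : EuclideanSpace ℝ (Fin d) | p - ((inner ℝ p (e i) : ℝ)) • e i = 0} := by
      ext p
      constructor
      · intro hp
        obtain ⟨r, hr, rfl⟩ := (hmemJ i p).1 hp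
        refine ⟨?_, ?_⟩
        · show 0 ≤ (inner ℝ (r • e i) (e i) : ℝ)
          rw [hinner i r]; exact hr
        · show r • e i - ((inner ℝ (r • e i) (e i) : ℝ)) • e i = 0
          rw [hinner i r, sub_self]
      · rintro ⟨h1, h2⟩
        exact (hmemJ i p).2 ⟨_, h1, (sub_eq_zero.1 h2)⟩
    rw [this]
    have hc : Continuous fun p : EuclideanSpace ℝ (Fin d) => (inner ℝ p (e i) : ℝ) :=
      continuous_id.inner continuous_const
    exact (isClosed_le continuous_const hc).inter
      (isClosed_eq (continuous_id.sub (hc.smul continuous_const)) continuous_const)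
  -- integrability
  haveI : IsFiniteMeasure μ := by
    constructor
    rw [hμ, Measure.restrict_apply_univ]
    exact measure_Icc_lt_top
  have hαint : IntegrableOn α (Icc (0 : ℝ) T) volume := hα.integrable one_le_two
  set f : ℝ → EuclideanSpace ℝ (Fin d) := (Icc (0 : ℝ) T).indicator α with hf
  have hfint : Integrable f (volume : Measure ℝ) :=
    (integrable_indicator_iff measurableSet_Icc).2 hαint
  set F : ℝ → EuclideanSpace ℝ (Fin d) := fun z => ∫ t in (0:ℝ)..z, f t with hFdef
  have hyF : ∀ t ∈ Icc (0 : ℝ) T, y t = y 0 + F t := by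
    intro t ht
    rw [(hy t ht).1]
    congr 1
    apply intervalIntegral.integral_congr
    intro τ hτ
    rw [uIcc_of_le ht.1] at hτ
    exact (indicator_of_mem (Icc_subset_Icc le_rfl ht.2 hτ) α).symm
  have hFcont : Continuous F :=
    intervalIntegral.continuous_primitive (fun a b => hfint.intervalIntegrable) 0
  -- zero set
  set Z : Set ℝ := Icc (0 : ℝ) T ∩ (fun t => y 0 + F t) ⁻¹' {0} with hZ
  have hZmeas : MeasurableSet Z :=
    (measurableSet_Icc.inter ((isClosed_singleton.preimage
      (continuous_const.add hFcont)).measurableSet))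
  have hZmem : ∀ t ∈ Icc (0 : ℝ) T, (y t = 0 ↔ t ∈ Z) := by
    intro t ht
    rw [hZ, mem_inter_iff, mem_preimage, mem_singleton_iff, ← hyF t ht]
    exact ⟨fun h => ⟨ht, h⟩, fun h => h.2⟩
  -- density points of Z accumulate
  have hdens : ∀ᵐ s ∂μ, s ∈ Z → (𝓝[Z \ {s}] s).NeBot := by
    have hB := Besicovitch.ae_tendsto_measure_inter_div_of_measurableSet
      (volume : Measure ℝ) hZmeas
    refine ae_restrict_of_ae (hB.mono fun x hx hxZ => ?_)
    have htd : Filter.Tendsto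
        (fun r => volume (Z ∩ Metric.closedBall x r) / volume (Metric.closedBall x r))
        (𝓝[>] (0:ℝ)) (𝓝 1) := by
      have : Z.indicator (1 : ℝ → ℝ≥0∞) x = 1 := by
        rw [indicator_of_mem hxZ]; rfl
      rwa [this] at hx
    by_contra hnb
    have hclos : x ∉ closure (Z \ {x}) := by
      intro hc
      exact hnb (mem_closure_iff_nhdsWithin_neBot.1 hc)
    rw [Metric.mem_closure_iff] at hclos
    push_neg at hclos
    obtain ⟨ε, hε, hεsep⟩ := hclos
    have hzero : ∀ᶠ r in 𝓝[>] (0:ℝ),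
        volume (Z ∩ Metric.closedBall x r) / volume (Metric.closedBall x r) = 0 := by
      filter_upwards [Ioo_mem_nhdsGT (half_pos hε)] with r hr
      have hsub : Z ∩ Metric.closedBall x r ⊆ {x} := by
        rintro t ⟨htZ, htb⟩
        by_contra htx
        have := hεsep t ⟨htZ, htx⟩
        rw [Metric.mem_closedBall, dist_comm] at htb
        have h1 := hr.2
        linarith
      have : volume (Z ∩ Metric.closedBall x r) = 0 :=
        le_antisymm (le_trans (measure_mono hsub) (by simp)) zero_le
      rw [this, ENNReal.zero_div]
    have h0 : Filter.Tendsto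
        (fun r => volume (Z ∩ Metric.closedBall x r) / volume (Metric.closedBall x r))
        (𝓝[>] (0:ℝ)) (𝓝 0) :=
      Tendsto.congr' (hzero.mono fun r hr => hr.symm) tendsto_const_nhds
    exact one_ne_zero (tendsto_nhds_unique htd h0)
  -- FTC
  have hftc : ∀ᵐ s ∂μ, HasDerivAt F (f s) s := ae_restrict_of_ae (aux_ftc_leb hfint)
  have hIoo : ∀ᵐ s ∂μ, s ∈ Ioo 0 T := by
    have h1 : ∀ᵐ s ∂μ, s ∈ Icc (0:ℝ) T := ae_restrict_mem measurableSet_Icc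
    have hv : volume ({(0:ℝ), T} : Set ℝ) = 0 :=
      ((Set.finite_singleton T).insert (0:ℝ)).measure_zero _
    have h2 : ∀ᵐ s ∂μ, s ∉ ({(0:ℝ), T} : Set ℝ) :=
      ae_restrict_of_ae (measure_eq_zero_iff_ae_notMem.1 hv)
    filter_upwards [h1, h2] with s hs1 hs2
    simp only [mem_insert_iff, mem_singleton_iff, not_or] at hs2
    exact ⟨hs1.1.lt_of_ne' hs2.1, hs1.2.lt_of_ne hs2.2⟩
  -- main argument
  have main : ∀ᵐ s ∂μ,
      (α s = ∑ i : Fin (N + 1),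
        (J i \ {0}).indicator (fun _ => ((inner ℝ (α s) (e i) : ℝ)) • e i) (y s)) ∧
      (∀ i, y s ∈ J i \ {0} → ∃ c : ℝ, α s = c • e i) := by
    filter_upwards [hftc, hIoo, hdens] with s hder hs hzacc
    have hsIcc : s ∈ Icc (0:ℝ) T := Ioo_subset_Icc_self hs
    -- y has derivative α s at s
    have hyd : HasDerivAt y (α s) s := by
      have h1 : HasDerivAt (fun t => y 0 + F t) (f s) s := hder.const_add (y 0)
      have h2 : (fun t => y 0 + F t) =ᶠ[𝓝 s] y := by
        filter_upwards [isOpen_Ioo.eventually_mem hs] with t ht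
        exact (hyF t (Ioo_subset_Icc_self ht)).symm
      have h3 : HasDerivAt y (f s) s := h1.congr_of_eventuallyEq h2.symm
      rwa [hf, indicator_of_mem hsIcc] at h3
    by_cases hy0 : y s = 0
    · -- zero case : α s = 0
      have hsZ : s ∈ Z := (hZmem s hsIcc).1 hy0
      haveI hnb : (𝓝[Z \ {s}] s).NeBot := hzacc hsZ
      have hslope := hasDerivAt_iff_tendsto_slope.1 hyd
      have hle : 𝓝[Z \ {s}] s ≤ 𝓝[≠] s :=
        nhdsWithin_mono _ (fun t ht => ht.2)
      have h0 : Filter.Tendsto (slope y s) (𝓝[Z \ {s}] s) (𝓝 (α s)) := hslope.mono_left hle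
      have hconst : ∀ᶠ t in 𝓝[Z \ {s}] s, slope y s t = 0 := by
        filter_upwards [self_mem_nhdsWithin] with t ht
        have hyt : y t = 0 := by
          rw [hZmem t ht.1.1]; exact ht.1
        rw [slope_def_module, hyt, hy0, sub_zero, smul_zero]
      have hα0 : α s = 0 :=
        (tendsto_nhds_unique (Tendsto.congr' (hconst.mono fun t ht => ht.symm)
          tendsto_const_nhds) h0).symm
      constructor
      · rw [hα0]
        symm
        apply Finset.sum_eq_zero
        intro i _
        apply indicator_of_notMem
        rw [hy0]
        exact fun h => h.2 rfl
      · intro i hi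
        exact absurd (by rw [hy0]; rfl : y s ∈ ({0} : Set (EuclideanSpace ℝ (Fin d)))) hi.2
    · -- edge case
      obtain ⟨i, hyJi⟩ : ∃ i, y s ∈ J i := by
        have := (hy s hsIcc).2
        rw [hG] at this
        exact mem_iUnion.1 this
      -- y stays on edge i near s
      set K : Set (EuclideanSpace ℝ (Fin d)) := ⋃ j : {j : Fin (N+1) // j ≠ i}, J j with hK
      have hKclosed : IsClosed K := isClosed_iUnion_of_finite fun j => hJclosed j
      have hyK : y s ∉ K := by
        intro hmem
        obtain ⟨j, hj⟩ := mem_iUnion.1 hmem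
        exact j.2 (huniq (y s) j i hy0 hj hyJi)
      have hev : ∀ᶠ t in 𝓝 s, y t = ((inner ℝ (y t) (e i) : ℝ)) • e i := by
        have hcont : ContinuousAt y s := hyd.continuousAt
        have h1 : ∀ᶠ t in 𝓝 s, y t ∈ Kᶜ :=
          hcont.eventually_mem (hKclosed.isOpen_compl.mem_nhds hyK)
        filter_upwards [h1, isOpen_Ioo.eventually_mem hs] with t ht1 ht2
        have hG' : y t ∈ G := (hy t (Ioo_subset_Icc_self ht2)).2
        rw [hG] at hG'
        obtain ⟨j, hj⟩ := mem_iUnion.1 hG'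
        have hji : j = i := by
          by_contra hji
          exact ht1 (mem_iUnion.2 ⟨⟨j, hji⟩, hj⟩)
        subst hji
        obtain ⟨r, hr, hrt⟩ := (hmemJ j _).1 hj
        rw [hrt, hinner j r]
      have hLy : HasDerivAt (fun t => (inner ℝ (y t) (e i) : ℝ)) ((inner ℝ (α s) (e i) : ℝ)) s := by
        have := HasDerivAt.inner ℝ hyd (hasDerivAt_const s (e i))
        simpa using this
      have hg : HasDerivAt (fun t => ((inner ℝ (y t) (e i) : ℝ)) • e i)
          (((inner ℝ (α s) (e i) : ℝ)) • e i) s := hLy.smul_const (e i)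
      have hyg : HasDerivAt y (((inner ℝ (α s) (e i) : ℝ)) • e i) s :=
        hg.congr_of_eventuallyEq (hev.mono fun t ht => ht)
      have key : α s = ((inner ℝ (α s) (e i) : ℝ)) • e i := hyd.unique hyg
      constructor
      · rw [Finset.sum_eq_single i]
        · have hmem' : y s ∈ J i \ {0} := ⟨hyJi, hy0⟩
          rw [indicator_of_mem hmem']
          exact key
        · intro j _ hji
          apply indicator_of_notMem
          intro hj
          exact hji (huniq (y s) j i hy0 hj.1 hyJi)
        · intro h
          exact absurd (Finset.mem_univ i) h
      · intro j hj
        have hji : j = i := huniq (y s) j i hy0 hj.1 hyJi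
        subst hji
        exact ⟨_, key⟩
  exact ⟨main.mono fun s hs => hs.1, main.mono fun s hs => hs.2⟩
end

section
/- Stability of admissibility under weak limits: let y_n ∈ W^{1,2}([t,T];𝒢) be admissible curves on the junction with uniformly bounded L² derivatives, y_n → y uniformly on [t,T], and ẏ_n ⇀ α weakly in L²([t,T];ℝ^d). Then y ∈ W^{1,2}([t,T];𝒢) with ẏ = α, and for a.e. s, either y(s) = O and α(s) = 0, or y(s) ∈ J_i \ {O} for some i and α(s) is parallel to e_i; i.e., y is an admissible curve. -/
open Set MeasureTheory Filter

theorem avg_bound {E : Type*} [NormedAddCommGroup E] [NormedSpace ℝ E] [CompleteSpace E]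
    {f : ℝ → E} (hf : Integrable f volume) {a b : ℝ} (hab : a < b) (v : E) :
    ‖(b - a)⁻¹ • (∫ τ in a..b, f τ) - v‖ ≤ ⨍ τ in Icc a b, ‖f τ - v‖ := by
  have hba : (0:ℝ) < b - a := by linarith
  have hμ : ((volume : Measure ℝ) (Icc a b)).toReal = b - a := by
    rw [Real.volume_Icc]; exact ENNReal.toReal_ofReal hba.le
  rw [setAverage_eq, measureReal_def, hμ, smul_eq_mul]
  have h1 : (∫ τ in a..b, f τ) - (b - a) • v = ∫ τ in a..b, (f τ - v) := by
    rw [intervalIntegral.integral_sub hf.intervalIntegrable intervalIntegrable_const,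
      intervalIntegral.integral_const]
  have h2 : (b - a)⁻¹ • (∫ τ in a..b, f τ) - v
      = (b - a)⁻¹ • ((∫ τ in a..b, f τ) - (b - a) • v) := by
    rw [smul_sub, smul_smul, inv_mul_cancel₀ hba.ne', one_smul]
  rw [h2, h1, norm_smul, Real.norm_eq_abs, abs_of_pos (inv_pos.2 hba)]
  have h3 : ‖∫ τ in a..b, (f τ - v)‖ ≤ ∫ τ in a..b, ‖f τ - v‖ :=
    intervalIntegral.norm_integral_le_integral_norm hab.le
  have h4 : (∫ τ in a..b, ‖f τ - v‖) = ∫ τ in Icc a b, ‖f τ - v‖ := by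
    rw [intervalIntegral.integral_of_le hab.le, integral_Icc_eq_integral_Ioc]
  rw [← h4]
  exact mul_le_mul_of_nonneg_left h3 (inv_pos.2 hba).le

theorem ae_hasDerivAt_primitive {E : Type*} [NormedAddCommGroup E] [NormedSpace ℝ E]
    [CompleteSpace E] {f : ℝ → E} (hf : Integrable f volume) (t : ℝ) :
    ∀ᵐ x : ℝ, HasDerivAt (fun u => ∫ τ in t..u, f τ) (f x) x := by
  have hloc := hf.locallyIntegrable
  filter_upwards [(IsUnifLocDoublingMeasure.vitaliFamily (volume : Measure ℝ)
      1).ae_tendsto_average_norm_sub hloc] with x hx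
  set F : ℝ → E := fun u => ∫ τ in t..u, f τ with hFdef
  have hxr : Tendsto (fun y => ⨍ τ in Icc x y, ‖f τ - f x‖) (nhdsWithin x (Ioi x)) (nhds 0) :=
    hx.comp (Real.tendsto_Icc_vitaliFamily_right x)
  have hxl : Tendsto (fun y => ⨍ τ in Icc y x, ‖f τ - f x‖) (nhdsWithin x (Iio x)) (nhds 0) :=
    hx.comp (Real.tendsto_Icc_vitaliFamily_left x)
  rw [hasDerivAt_iff_tendsto_slope, ← nhdsLT_sup_nhdsGT x, tendsto_sup]
  constructor
  · rw [tendsto_iff_norm_sub_tendsto_zero]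
    refine squeeze_zero' (Eventually.of_forall fun y => norm_nonneg _) ?_ hxl
    filter_upwards [self_mem_nhdsWithin] with y (hy : y < x)
    have hFd : F x - F y = ∫ τ in y..x, f τ :=
      intervalIntegral.integral_interval_sub_left hf.intervalIntegrable hf.intervalIntegrable
    have hs : slope F x y = (x - y)⁻¹ • (F x - F y) := by
      rw [slope_comm, slope_def_module]
    rw [hs, hFd]
    exact avg_bound hf hy (f x)
  · rw [tendsto_iff_norm_sub_tendsto_zero]
    refine squeeze_zero' (Eventually.of_forall fun y => norm_nonneg _) ?_ hxr
    filter_upwards [self_mem_nhdsWithin] with y (hy : x < y)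
    have hFd : F y - F x = ∫ τ in x..y, f τ :=
      intervalIntegral.integral_interval_sub_left hf.intervalIntegrable hf.intervalIntegrable
    have hs : slope F x y = (y - x)⁻¹ • (F y - F x) := slope_def_module F x y
    rw [hs, hFd]
    exact avg_bound hf hy (f x)

theorem ae_neBot_nhdsWithin_diff (S : Set ℝ) :
    ∀ᵐ x ∂((volume : Measure ℝ).restrict S), (nhdsWithin x (S \ {x})).NeBot := by
  filter_upwards [Besicovitch.ae_tendsto_measure_inter_div volume S] with x hx
  rw [← mem_closure_iff_nhdsWithin_neBot, Metric.mem_closure_iff]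
  intro ε hε
  have h1 : ∀ᶠ r in nhdsWithin (0:ℝ) (Ioi 0),
      (1:ENNReal)/2 < volume (S ∩ Metric.closedBall x r) / volume (Metric.closedBall x r) :=
    hx (Ioi_mem_nhds (by norm_num))
  have h2 : ∀ᶠ r in nhdsWithin (0:ℝ) (Ioi 0), r < ε :=
    eventually_nhdsWithin_of_eventually_nhds (Filter.Tendsto.eventually_lt_const hε tendsto_id)
  obtain ⟨r, hr1, hr2⟩ := (h1.and h2).exists
  have hpos : volume (S ∩ Metric.closedBall x r) ≠ 0 := by
    intro h0
    rw [h0] at hr1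
    simp at hr1
  have hpos2 : volume ((S ∩ Metric.closedBall x r) \ {x}) ≠ 0 := by
    intro h0
    apply hpos
    have hsub : S ∩ Metric.closedBall x r ⊆ ((S ∩ Metric.closedBall x r) \ {x}) ∪ {x} := by
      intro z hz; by_cases hzx : z = x
      · exact Or.inr hzx
      · exact Or.inl ⟨hz, hzx⟩
    refine le_antisymm ?_ zero_le
    calc volume (S ∩ Metric.closedBall x r) ≤ volume (((S ∩ Metric.closedBall x r) \ {x}) ∪ {x}) :=
          measure_mono hsub
      _ ≤ volume ((S ∩ Metric.closedBall x r) \ {x}) + volume ({x} : Set ℝ) := measure_union_le _ _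
      _ = 0 := by rw [h0, Real.volume_singleton, add_zero]
  obtain ⟨z, hz⟩ := nonempty_of_measure_ne_zero hpos2
  refine ⟨z, ⟨hz.1.1, hz.2⟩, ?_⟩
  have : dist z x ≤ r := hz.1.2
  rw [dist_comm]
  linarith

/-- Stability of admissibility under weak limits: uniform limits of admissible curves
with weakly converging derivatives are admissible curves. -/
theorem stmt_9 {d N : ℕ} (t T : ℝ) (htT : t < T)
    (e : Fin (N + 1) → EuclideanSpace ℝ (Fin d))
    (he : ∀ i, ‖e i‖ = 1) (hinj : Function.Injective e)
    (J : Fin (N + 1) → Set (EuclideanSpace ℝ (Fin d)))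
    (hJ : ∀ i, J i = {p | ∃ r : ℝ, 0 ≤ r ∧ p = r • e i})
    (G : Set (EuclideanSpace ℝ (Fin d)))
    (hG : G = ⋃ i, J i)
    (y : ℕ → ℝ → EuclideanSpace ℝ (Fin d)) (ylim : ℝ → EuclideanSpace ℝ (Fin d))
    (α : ℝ → EuclideanSpace ℝ (Fin d))
    (C : ℝ)
    (hadm : ∀ n, ∀ s ∈ Icc t T,
      (y n s = y n t + ∫ τ in t..s, deriv (y n) τ) ∧ y n s ∈ G)
    (hders : ∀ n, MemLp (deriv (y n)) 2 (volume.restrict (Icc t T)))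
    (hbd : ∀ n, (∫ τ in Icc t T, ‖deriv (y n) τ‖ ^ 2) ≤ C ^ 2)
    (hunif : TendstoUniformlyOn y ylim atTop (Icc t T))
    (hαlim : MemLp α 2 (volume.restrict (Icc t T)))
    (hweak : ∀ g : ℝ → EuclideanSpace ℝ (Fin d), MemLp g 2 (volume.restrict (Icc t T)) →
      Tendsto (fun n => ∫ τ in Icc t T, (inner ℝ (deriv (y n) τ) (g τ) : ℝ)) atTop
        (nhds (∫ τ in Icc t T, (inner ℝ (α τ) (g τ) : ℝ)))) :
    (∀ s ∈ Icc t T, (ylim s = ylim t + ∫ τ in t..s, α τ) ∧ ylim s ∈ G) ∧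
    ∀ᵐ s ∂(volume.restrict (Icc t T)),
      (ylim s = 0 ∧ α s = 0) ∨
      ∃ i, ylim s ∈ J i \ {0} ∧ ∃ c : ℝ, α s = c • e i := by
  have ht : t ∈ Icc t T := ⟨le_refl t, htT.le⟩
  have hIntα : IntegrableOn α (Icc t T) volume := hαlim.integrable one_le_two
  have hIntd : ∀ n, IntegrableOn (deriv (y n)) (Icc t T) volume :=
    fun n => (hders n).integrable one_le_two
  -- closedness of edges
  have hJclosed : ∀ i, IsClosed (J i) := by
    intro i
    have hset : J i = {p : EuclideanSpace ℝ (Fin d) |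
        (inner ℝ p (e i) : ℝ) • e i = p ∧ 0 ≤ (inner ℝ p (e i) : ℝ)} := by
      rw [hJ i]; ext p
      constructor
      · rintro ⟨r, hr, rfl⟩
        have hip : (inner ℝ (r • e i) (e i) : ℝ) = r := by
          rw [real_inner_smul_left, real_inner_self_eq_norm_sq, he i]; ring
        simp only [Set.mem_setOf_eq]
        rw [hip]; exact ⟨rfl, hr⟩
      · rintro ⟨hp, hr⟩; exact ⟨_, hr, hp.symm⟩
    rw [hset, Set.setOf_and]
    exact IsClosed.inter
      (isClosed_eq (by fun_prop)
        continuous_id)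
      (isClosed_le continuous_const (Continuous.inner continuous_id continuous_const))
  have hGclosed : IsClosed G := by
    rw [hG]; exact isClosed_iUnion_of_finite hJclosed
  -- part 1, integral identity over Icc t s
  have key1 : ∀ s ∈ Icc t T, ylim s - ylim t = ∫ τ in Icc t s, α τ := by
    intro s hs
    have hts : t ≤ s := hs.1
    have hIccsub : Icc t s ⊆ Icc t T := Icc_subset_Icc le_rfl hs.2
    have hIαs : IntegrableOn α (Icc t s) volume := hIntα.mono_set hIccsub
    have hIds : ∀ n, IntegrableOn (deriv (y n)) (Icc t s) volume :=
      fun n => (hIntd n).mono_set hIccsub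
    apply ext_inner_right ℝ
    intro w
    have lim1 : Tendsto (fun n => (inner ℝ (y n s - y n t) w : ℝ)) atTop
        (nhds (inner ℝ (ylim s - ylim t) w)) :=
      Tendsto.inner ((hunif.tendsto_at hs).sub (hunif.tendsto_at ht)) tendsto_const_nhds
    set g : ℝ → EuclideanSpace ℝ (Fin d) := (Icc t s).indicator (fun _ => w) with hg
    have hgmem : MemLp g 2 (volume.restrict (Icc t T)) :=
      (memLp_const w).indicator measurableSet_Icc
    have hgint : ∀ β : ℝ → EuclideanSpace ℝ (Fin d),
        (∫ τ in Icc t T, (inner ℝ (β τ) (g τ) : ℝ)) = ∫ τ in Icc t s, (inner ℝ (β τ) w : ℝ) := by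
      intro β
      have hind : (fun τ => (inner ℝ (β τ) (g τ) : ℝ))
          = (Icc t s).indicator (fun τ => (inner ℝ (β τ) w : ℝ)) := by
        funext τ
        by_cases hτ : τ ∈ Icc t s
        · simp [hg, indicator_of_mem hτ]
        · simp [hg, indicator_of_notMem hτ]
      rw [hind, setIntegral_indicator measurableSet_Icc,
        inter_eq_self_of_subset_right hIccsub]
    have lim2 := hweak g hgmem
    rw [hgint α] at lim2
    have hfn : (fun n => ∫ τ in Icc t T, (inner ℝ (deriv (y n) τ) (g τ) : ℝ))
        = fun n => ∫ τ in Icc t s, (inner ℝ (deriv (y n) τ) w : ℝ) :=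
      funext fun n => hgint (deriv (y n))
    rw [hfn] at lim2
    have e1 : ∀ n, (∫ τ in Icc t s, (inner ℝ (deriv (y n) τ) w : ℝ))
        = (inner ℝ (y n s - y n t) w : ℝ) := by
      intro n
      have hcomm : (fun τ => (inner ℝ (deriv (y n) τ) w : ℝ))
          = fun τ => (inner ℝ w (deriv (y n) τ) : ℝ) := funext fun τ => real_inner_comm _ _
      have h1 : ∫ τ in Icc t s, (inner ℝ (deriv (y n) τ) w : ℝ)
          = (inner ℝ (∫ τ in Icc t s, deriv (y n) τ) w : ℝ) := by
        rw [hcomm, integral_inner (hIds n) w, real_inner_comm]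
      have h2' : (∫ τ in t..s, deriv (y n) τ) = y n s - y n t := by
        rw [(hadm n s hs).1]; abel
      have h2 : (∫ τ in Icc t s, deriv (y n) τ) = y n s - y n t := by
        rw [integral_Icc_eq_integral_Ioc, ← intervalIntegral.integral_of_le hts, h2']
      rw [h1, h2]
    have e2 : (∫ τ in Icc t s, (inner ℝ (α τ) w : ℝ))
        = (inner ℝ (∫ τ in Icc t s, α τ) w : ℝ) := by
      have hcomm : (fun τ => (inner ℝ (α τ) w : ℝ))
          = fun τ => (inner ℝ w (α τ) : ℝ) := funext fun τ => real_inner_comm _ _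
      rw [hcomm, integral_inner hIαs w, real_inner_comm]
    rw [funext e1, e2] at lim2
    exact tendsto_nhds_unique lim1 lim2
  have key1' : ∀ s ∈ Icc t T, ylim s = ylim t + ∫ τ in t..s, α τ := by
    intro s hs
    have := key1 s hs
    rw [integral_Icc_eq_integral_Ioc, ← intervalIntegral.integral_of_le hs.1] at this
    rw [← this]; abel
  have keyG : ∀ s ∈ Icc t T, ylim s ∈ G := fun s hs =>
    hGclosed.mem_of_tendsto (hunif.tendsto_at hs)
      (Eventually.of_forall fun n => (hadm n s hs).2)
  refine ⟨fun s hs => ⟨key1' s hs, keyG s hs⟩, ?_⟩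
  -- Part 2: a.e. dichotomy
  set α' : ℝ → EuclideanSpace ℝ (Fin d) := (Icc t T).indicator α with hα'def
  have hα'int : Integrable α' volume :=
    (integrable_indicator_iff measurableSet_Icc).2 hIntα
  set F : ℝ → EuclideanSpace ℝ (Fin d) := fun u => ∫ τ in t..u, α' τ with hFdef
  have hFs : ∀ s ∈ Icc t T, ylim s = ylim t + F s := by
    intro s hs
    rw [key1' s hs]
    congr 1
    rw [hFdef]
    simp only
    have hsub : Ioc t s ⊆ Icc t T := fun x hx => ⟨le_of_lt hx.1, hx.2.trans hs.2⟩
    rw [intervalIntegral.integral_of_le hs.1, intervalIntegral.integral_of_le hs.1,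
      hα'def, setIntegral_indicator measurableSet_Icc,
      inter_eq_self_of_subset_left hsub]
  set z : ℝ → EuclideanSpace ℝ (Fin d) := fun u => ylim t + F u with hzdef
  have hFcont : Continuous F :=
    intervalIntegral.continuous_primitive (fun a b => hα'int.intervalIntegrable) t
  have hzcont : Continuous z := continuous_const.add hFcont
  set A : Set ℝ := Icc t T ∩ z ⁻¹' {0} with hAdef
  have hAmem : ∀ x, x ∈ A ↔ x ∈ Icc t T ∧ ylim x = 0 := by
    intro x
    constructor
    · rintro ⟨hx1, hx2⟩
      have hx2' : z x = 0 := hx2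
      exact ⟨hx1, by rw [hFs x hx1]; exact hx2'⟩
    · rintro ⟨hx1, hx2⟩
      refine ⟨hx1, show z x = 0 from ?_⟩
      show ylim t + F x = 0
      rw [← hFs x hx1]; exact hx2
  have hAmeas : MeasurableSet A :=
    measurableSet_Icc.inter (hzcont.measurable (measurableSet_singleton _))
  rw [ae_restrict_iff' measurableSet_Icc]
  have E1 := ae_hasDerivAt_primitive hα'int t
  have E2 : ∀ᵐ x : ℝ, x ∈ A → (nhdsWithin x (A \ {x})).NeBot := by
    have h := ae_neBot_nhdsWithin_diff A
    rwa [ae_restrict_iff' hAmeas] at h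
  have E3 : ∀ᵐ x : ℝ, x ≠ t ∧ x ≠ T := by
    rw [ae_iff]
    refine measure_mono_null (fun x hx => ?_ : _ ⊆ ({t, T} : Set ℝ))
      (Set.Countable.measure_zero (by simp) volume)
    simp only [Set.mem_setOf_eq, not_and_or, not_not] at hx
    rcases hx with h | h
    · exact Or.inl h
    · exact Or.inr h
  filter_upwards [E1, E2, E3] with s h1 h2 h3 hs
  have hsIoo : s ∈ Ioo t T := ⟨lt_of_le_of_ne hs.1 h3.1.symm, lt_of_le_of_ne hs.2 h3.2⟩
  have hnb : Icc t T ∈ nhds s := Icc_mem_nhds hsIoo.1 hsIoo.2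
  have heq : ylim =ᶠ[nhds s] z := eventually_of_mem hnb hFs
  have hd : HasDerivAt ylim (α s) s := by
    have hz' : HasDerivAt z (α' s) s := HasDerivAt.const_add (ylim t) h1
    have hc := hz'.congr_of_eventuallyEq heq
    rwa [hα'def, indicator_of_mem hs] at hc
  by_cases h0 : ylim s = 0
  · left
    refine ⟨h0, ?_⟩
    have hsA : s ∈ A := (hAmem s).2 ⟨hs, h0⟩
    haveI := h2 hsA
    have ht1 : Tendsto (slope ylim s) (nhdsWithin s (A \ {s})) (nhds (α s)) :=
      (hasDerivAt_iff_tendsto_slope.1 hd).mono_left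
        (nhdsWithin_mono s (fun x hx => hx.2))
    have ht2 : Tendsto (slope ylim s) (nhdsWithin s (A \ {s})) (nhds 0) := by
      have hzero : ∀ x ∈ A \ {s}, slope ylim s x = 0 := by
        intro x hx
        have hylx : ylim x = 0 := ((hAmem x).1 hx.1).2
        rw [slope_def_module, hylx, h0, sub_zero, smul_zero]
      exact tendsto_const_nhds.congr'
        (eventually_of_mem self_mem_nhdsWithin fun x hx => (hzero x hx).symm)
    exact tendsto_nhds_unique ht1 ht2
  · right
    have hsG := keyG s hs
    rw [hG] at hsG
    obtain ⟨i, hmem⟩ := mem_iUnion.1 hsG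
    refine ⟨i, ⟨hmem, by simpa using h0⟩, (inner ℝ (α s) (e i) : ℝ), ?_⟩
    -- separation from other edges
    have hKclosed : IsClosed (⋃ j : {j : Fin (N+1) // j ≠ i}, J (j : Fin (N+1))) :=
      isClosed_iUnion_of_finite (fun j => hJclosed j)
    have hnotK : ylim s ∉ ⋃ j : {j : Fin (N+1) // j ≠ i}, J (j : Fin (N+1)) := by
      rw [mem_iUnion]
      rintro ⟨⟨j, hj⟩, hmemj⟩
      have hmi := hmem
      rw [hJ i] at hmi
      rw [hJ j] at hmemj
      obtain ⟨r, hr, hri⟩ := hmi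
      obtain ⟨r', hr', hrj⟩ := hmemj
      have hrne : r ≠ 0 := by
        rintro rfl
        apply h0
        rw [hri, zero_smul]
      have hnorm1 : ‖ylim s‖ = r := by
        rw [hri, norm_smul, he i, mul_one, Real.norm_eq_abs, abs_of_nonneg hr]
      have hnorm2 : ‖ylim s‖ = r' := by
        rw [hrj, norm_smul, he j, mul_one, Real.norm_eq_abs, abs_of_nonneg hr']
      have hrr' : r' = r := by rw [← hnorm1, hnorm2]
      have hee : r • e i = r • e j := by
        rw [← hri]
        rw [hrj, hrr']
      exact hj (hinj (smul_right_injective _ hrne hee).symm)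
    obtain ⟨ε, hε, hball⟩ :=
      Metric.isOpen_iff.1 hKclosed.isOpen_compl (ylim s) hnotK
    have hev : ∀ᶠ τ in nhds s, ylim τ ∈ J i := by
      have h5 : ∀ᶠ τ in nhds s, z τ ∈ Metric.ball (z s) ε :=
        hzcont.continuousAt (Metric.ball_mem_nhds _ hε)
      filter_upwards [h5, hnb] with τ h5τ hτIcc
      have hyτ : ylim τ = z τ := hFs τ hτIcc
      have hGτ := keyG τ hτIcc
      rw [hG] at hGτ
      obtain ⟨j, hjmem⟩ := mem_iUnion.1 hGτ
      by_cases hji : j = i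
      · rwa [hji] at hjmem
      · exfalso
        have hball' : ylim τ ∈ Metric.ball (ylim s) ε := by
          rw [hyτ, hFs s hs]
          exact h5τ
        exact hball hball' (mem_iUnion.2 ⟨⟨j, hji⟩, hjmem⟩)
    set q : ℝ → EuclideanSpace ℝ (Fin d) :=
      fun u => ylim u - (inner ℝ (ylim u) (e i) : ℝ) • e i with hqdef
    have hq0 : q =ᶠ[nhds s] (fun _ => 0) := by
      filter_upwards [hev] with τ hτ
      rw [hJ i] at hτ
      obtain ⟨r, hr, hrτ⟩ := hτ
      have hip : (inner ℝ (r • e i) (e i) : ℝ) = r := by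
        rw [real_inner_smul_left, real_inner_self_eq_norm_sq, he i]; ring
      simp only [hqdef, hrτ, hip, sub_self]
    have h6 : HasDerivAt (fun u => (inner ℝ (ylim u) (e i) : ℝ))
        ((inner ℝ (α s) (e i) : ℝ)) s := by
      have := HasDerivAt.inner ℝ hd (hasDerivAt_const s (e i))
      simpa using this
    have hdq : HasDerivAt q ((α s) - (inner ℝ (α s) (e i) : ℝ) • e i) s :=
      hd.sub (h6.smul_const (e i))
    have hdq0 : HasDerivAt q (0 : EuclideanSpace ℝ (Fin d)) s :=
      (hasDerivAt_const s (0 : EuclideanSpace ℝ (Fin d))).congr_of_eventuallyEq hq0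
    have hzero := hdq.unique hdq0
    exact (sub_eq_zero.1 hzero)
end

section
/- Trajectory approximation from a nearby initial point: let x, x_n ∈ 𝒢 lie on the same edge J₁ with δ_n := d(x_n, x) → 0, and let (y,α) ∈ Γ[x] be an admissible trajectory on [0,T]. Define α_n(s) = ±e₁ for s ∈ [0,δ_n] (moving from x_n to x at unit speed) and α_n(s) = (T/(T−δ_n)) α((s−δ_n)T/(T−δ_n)) for s ∈ (δ_n, T], and let y_n be the corresponding curve from x_n. Then (y_n, α_n) ∈ Γ[x_n], y_n(T) = y(T), sup_{[0,T]} d(y_n(·), y(·)) ≤ δ_n + ‖α‖_{L²} √δ_n, and ‖α_n‖_{L²}² ≤ ‖α‖_{L²}² + δ_n (1 + ‖α‖_{L²}²/(T−δ_n)). -/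
open Set MeasureTheory

/-- Trajectory approximation from a nearby initial point on the same edge:
the rescaled-concatenated trajectories `(yₙ, αₙ)` are admissible from `xₙ`,
end at `y(T)`, stay `δₙ + ‖α‖₂√δₙ`-close to `y`, and have almost the same energy. -/
theorem stmt_10 {d N : ℕ} (T : ℝ) (hT : 0 < T)
    (e : Fin (N + 1) → EuclideanSpace ℝ (Fin d))
    (he : ∀ i, ‖e i‖ = 1) (hinj : Function.Injective e)
    (J : Fin (N + 1) → Set (EuclideanSpace ℝ (Fin d)))
    (hJ : ∀ i, J i = {p | ∃ r : ℝ, 0 ≤ r ∧ p = r • e i})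
    (G : Set (EuclideanSpace ℝ (Fin d)))
    (hG : G = ⋃ i, J i)
    -- geodesic distance
    (D : EuclideanSpace ℝ (Fin d) → EuclideanSpace ℝ (Fin d) → ℝ)
    (hDsame : ∀ x ∈ G, ∀ y ∈ G, (∃ i, x ∈ J i ∧ y ∈ J i) → D x y = ‖x - y‖)
    (hDdiff : ∀ x ∈ G, ∀ y ∈ G, (¬ ∃ i, x ∈ J i ∧ y ∈ J i) → D x y = ‖x‖ + ‖y‖)
    -- initial points on the first edge
    (a : ℝ) (b : ℕ → ℝ) (ha : 0 ≤ a) (hb : ∀ n, 0 ≤ b n)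
    (x : EuclideanSpace ℝ (Fin d)) (hx : x = a • e 0)
    (xn : ℕ → EuclideanSpace ℝ (Fin d)) (hxn : ∀ n, xn n = b n • e 0)
    (δ : ℕ → ℝ) (hδ : ∀ n, δ n = |b n - a|) (hδT : ∀ n, δ n < T)
    (hδ0 : Filter.Tendsto δ Filter.atTop (nhds 0))
    -- the reference admissible trajectory from `x`
    (y α : ℝ → EuclideanSpace ℝ (Fin d))
    (hα : MemLp α 2 (volume.restrict (Icc (0 : ℝ) T)))
    (hy : ∀ s ∈ Icc (0 : ℝ) T, (y s = x + ∫ τ in (0 : ℝ)..s, α τ) ∧ y s ∈ G)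
    -- the approximating controls and curves
    (αn : ℕ → ℝ → EuclideanSpace ℝ (Fin d))
    (hαn : ∀ n s, αn n s =
      if s ≤ δ n then (if b n ≤ a then e 0 else -e 0)
      else (T / (T - δ n)) • α ((s - δ n) * (T / (T - δ n))))
    (yn : ℕ → ℝ → EuclideanSpace ℝ (Fin d))
    (hyn : ∀ n s, yn n s = xn n + ∫ τ in (0 : ℝ)..s, αn n τ) :
    ∀ n,
      (MemLp (αn n) 2 (volume.restrict (Icc (0 : ℝ) T)) ∧
        ∀ s ∈ Icc (0 : ℝ) T, yn n s ∈ G) ∧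
      yn n T = y T ∧
      (∀ s ∈ Icc (0 : ℝ) T, D (yn n s) (y s) ≤
        δ n + Real.sqrt (∫ τ in (0 : ℝ)..T, ‖α τ‖ ^ 2) * Real.sqrt (δ n)) ∧
      (∫ τ in (0 : ℝ)..T, ‖αn n τ‖ ^ 2) ≤
        (∫ τ in (0 : ℝ)..T, ‖α τ‖ ^ 2) +
          δ n * (1 + (∫ τ in (0 : ℝ)..T, ‖α τ‖ ^ 2) / (T - δ n)) := by
  classical
  -- ## Global facts
  have hJclosed : ∀ i, IsClosed (J i) := by
    intro i
    rw [hJ i]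
    have hset : {p : EuclideanSpace ℝ (Fin d) | ∃ r : ℝ, 0 ≤ r ∧ p = r • e i} =
        (fun r : ℝ => r • e i) '' Ici 0 :=
      Set.ext fun p =>
        ⟨fun ⟨r, hr, hp⟩ => ⟨r, hr, hp.symm⟩, fun ⟨r, hr, hp⟩ => ⟨r, hr, hp.symm⟩⟩
    rw [hset]
    have hiso : Isometry (fun r : ℝ => r • e i) := by
      apply Isometry.of_dist_eq
      intro r s
      rw [dist_eq_norm, dist_eq_norm, ← sub_smul, norm_smul, he i, mul_one]
    exact hiso.isClosedEmbedding.isClosedMap _ isClosed_Ici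
  have hJzero : ∀ i, (0 : EuclideanSpace ℝ (Fin d)) ∈ J i := by
    intro i; rw [hJ i]; exact ⟨0, le_rfl, (zero_smul ℝ _).symm⟩
  have hJint : ∀ i j, i ≠ j → ∀ p, p ∈ J i → p ∈ J j → p = 0 := by
    intro i j hij p hpi hpj
    rw [hJ i] at hpi; rw [hJ j] at hpj
    obtain ⟨r, hr, rfl⟩ := hpi
    obtain ⟨r', hr', hEq⟩ := hpj
    have hrr : r = r' := by
      have h1 : ‖r • e i‖ = ‖r' • e j‖ := by rw [← hEq]
      rw [norm_smul, norm_smul, he i, he j, mul_one, mul_one, Real.norm_eq_abs,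
        Real.norm_eq_abs, abs_of_nonneg hr, abs_of_nonneg hr'] at h1
      exact h1
    rcases eq_or_lt_of_le hr with h0 | h0
    · rw [← h0, zero_smul]
    · exfalso
      apply hij
      apply hinj
      apply smul_right_injective _ (ne_of_gt h0)
      show r • e i = r • e j
      rw [hEq, hrr]
  have hJsubG : ∀ i, J i ⊆ G := by
    intro i; rw [hG]; exact subset_iUnion J i
  have hy1 : ∀ s ∈ Icc (0 : ℝ) T, y s = x + ∫ τ in (0 : ℝ)..s, α τ := fun s hs => (hy s hs).1
  have hy2 : ∀ s ∈ Icc (0 : ℝ) T, y s ∈ G := fun s hs => (hy s hs).2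
  have hy0 : y 0 = x := by
    have := hy1 0 ⟨le_rfl, hT.le⟩
    simpa using this
  have haint : IntegrableOn α (Icc (0 : ℝ) T) volume := by
    haveI : IsFiniteMeasure (volume.restrict (Icc (0 : ℝ) T)) :=
      ⟨by rw [Measure.restrict_apply_univ, Real.volume_Icc]; exact ENNReal.ofReal_lt_top⟩
    exact hα.integrable one_le_two
  have hsqint : IntegrableOn (fun τ => ‖α τ‖ ^ 2) (Icc (0 : ℝ) T) volume :=
    (memLp_two_iff_integrable_sq_norm hα.aestronglyMeasurable).1 hα
  have hsubIoc : ∀ u v : ℝ, u ∈ Icc (0 : ℝ) T → v ∈ Icc (0 : ℝ) T → Set.uIoc u v ⊆ Icc (0 : ℝ) T := by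
    intro u v hu hv t ht
    rw [Set.mem_uIoc] at ht
    rcases ht with ⟨h1, h2⟩ | ⟨h1, h2⟩
    · exact ⟨hu.1.trans h1.le, h2.trans hv.2⟩
    · exact ⟨hv.1.trans h1.le, h2.trans hu.2⟩
  have hII : ∀ u v : ℝ, u ∈ Icc (0 : ℝ) T → v ∈ Icc (0 : ℝ) T →
      IntervalIntegrable α volume u v := by
    intro u v hu hv
    rw [intervalIntegrable_iff]
    exact IntegrableOn.mono_set haint (hsubIoc u v hu hv)
  have hIIn : ∀ u v : ℝ, u ∈ Icc (0 : ℝ) T → v ∈ Icc (0 : ℝ) T →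
      IntervalIntegrable (fun τ => ‖α τ‖) volume u v := by
    intro u v hu hv
    rw [intervalIntegrable_iff]
    exact IntegrableOn.mono_set haint.norm (hsubIoc u v hu hv)
  have hIIs : ∀ u v : ℝ, u ∈ Icc (0 : ℝ) T → v ∈ Icc (0 : ℝ) T →
      IntervalIntegrable (fun τ => ‖α τ‖ ^ 2) volume u v := by
    intro u v hu hv
    rw [intervalIntegrable_iff]
    exact IntegrableOn.mono_set hsqint (hsubIoc u v hu hv)
  have hydiff : ∀ u v : ℝ, u ∈ Icc (0 : ℝ) T → v ∈ Icc (0 : ℝ) T →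
      y v - y u = ∫ τ in u..v, α τ := by
    intro u v hu hv
    rw [hy1 u hu, hy1 v hv, add_sub_add_left_eq_sub]
    exact intervalIntegral.integral_interval_sub_left (hII 0 v ⟨le_rfl, hT.le⟩ hv)
      (hII 0 u ⟨le_rfl, hT.le⟩ hu)
  have hycont : ContinuousOn y (Icc (0 : ℝ) T) := by
    have h1 : ContinuousOn (fun s => x + ∫ τ in (0 : ℝ)..s, α τ) (Icc (0 : ℝ) T) := by
      apply continuousOn_const.add
      have := intervalIntegral.continuousOn_primitive_interval
        (a := (0 : ℝ)) (b := T) (μ := volume) (f := α) ?_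
      · rwa [uIcc_of_le hT.le] at this
      · rwa [uIcc_of_le hT.le]
    exact h1.congr hy1
  -- ## The crossing lemma
  have hcross : ∀ u v : ℝ, u ∈ Icc (0 : ℝ) T → v ∈ Icc (0 : ℝ) T → u ≤ v →
      (¬ ∃ i, y u ∈ J i ∧ y v ∈ J i) → ‖y u‖ + ‖y v‖ ≤ ∫ τ in u..v, ‖α τ‖ := by
    intro u v hu hv huv hne
    obtain ⟨i₀, hyu0⟩ : ∃ i, y u ∈ J i := by
      have := hy2 u hu; rw [hG] at this; exact mem_iUnion.1 this
    set S : Set ℝ := {t | t ∈ Icc u v ∧ y t ∈ J i₀} with hS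
    have huS : u ∈ S := ⟨⟨le_rfl, huv⟩, hyu0⟩
    have hSne : S.Nonempty := ⟨u, huS⟩
    have hSbdd : BddAbove S := ⟨v, fun t ht => ht.1.2⟩
    set t₀ := sSup S with ht₀def
    have ht₀mem : t₀ ∈ Icc u v := ⟨le_csSup hSbdd huS, csSup_le hSne fun t ht => ht.1.2⟩
    have hsubT : Icc u v ⊆ Icc (0 : ℝ) T := Icc_subset_Icc hu.1 hv.2
    have ht₀T : t₀ ∈ Icc (0 : ℝ) T := hsubT ht₀mem
    have hyt₀ : y t₀ ∈ J i₀ := by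
      have hcont : ContinuousWithinAt y S t₀ :=
        (hycont t₀ ht₀T).mono (fun t ht => hsubT ht.1)
      have h1 : y t₀ ∈ closure (y '' S) :=
        hcont.mem_closure_image (csSup_mem_closure hSne hSbdd)
      exact closure_minimal (image_subset_iff.2 fun t ht => ht.2) (hJclosed i₀) h1
    have ht₀v : t₀ < v := by
      rcases lt_or_eq_of_le ht₀mem.2 with h | h
      · exact h
      · exact absurd ⟨i₀, hyu0, h ▸ hyt₀⟩ hne
    have hzero : y t₀ = 0 := by
      set K : Set (EuclideanSpace ℝ (Fin d)) := ⋃ i ∈ {j : Fin (N + 1) | j ≠ i₀}, J i with hK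
      have hKclosed : IsClosed K :=
        (Set.toFinite _).isClosed_biUnion fun i _ => hJclosed i
      have hmem : ∀ t ∈ Ioc t₀ v, y t ∈ K := by
        intro t ht
        have htI : t ∈ Icc u v := ⟨ht₀mem.1.trans ht.1.le, ht.2⟩
        have hyG' : y t ∈ G := hy2 t (hsubT htI)
        rw [hG] at hyG'
        obtain ⟨i, hi⟩ := mem_iUnion.1 hyG'
        have hine : i ≠ i₀ := by
          rintro rfl
          exact absurd (le_csSup hSbdd ⟨htI, hi⟩) (not_le.2 ht.1)
        exact mem_biUnion hine hi
      have hclos2 : t₀ ∈ closure (Ioc t₀ v) := by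
        rw [closure_Ioc (ne_of_lt ht₀v)]
        exact ⟨le_rfl, ht₀v.le⟩
      have hcont2 : ContinuousWithinAt y (Ioc t₀ v) t₀ :=
        (hycont t₀ ht₀T).mono (fun t ht => hsubT ⟨ht₀mem.1.trans ht.1.le, ht.2⟩)
      have hsubK : y '' Ioc t₀ v ⊆ K := by
        rintro p ⟨t, ht, rfl⟩
        exact hmem t ht
      have h1 : y t₀ ∈ K :=
        closure_minimal hsubK hKclosed (hcont2.mem_closure_image hclos2)
      obtain ⟨i, hine, hyi⟩ := mem_iUnion₂.1 h1
      exact hJint i i₀ hine _ hyi hyt₀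
    have h1 : ‖y u‖ ≤ ∫ τ in u..t₀, ‖α τ‖ := by
      have hd : y t₀ - y u = ∫ τ in u..t₀, α τ := hydiff u t₀ (hsubT ⟨le_rfl, huv⟩) ht₀T
      have : ‖y u‖ = ‖∫ τ in u..t₀, α τ‖ := by
        rw [← hd, hzero, zero_sub, norm_neg]
      rw [this]
      exact intervalIntegral.norm_integral_le_integral_norm ht₀mem.1
    have h2 : ‖y v‖ ≤ ∫ τ in t₀..v, ‖α τ‖ := by
      have hd : y v - y t₀ = ∫ τ in t₀..v, α τ := hydiff t₀ v ht₀T hv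
      have : ‖y v‖ = ‖∫ τ in t₀..v, α τ‖ := by
        rw [← hd, hzero, sub_zero]
      rw [this]
      exact intervalIntegral.norm_integral_le_integral_norm ht₀v.le
    have hadd : (∫ τ in u..t₀, ‖α τ‖) + ∫ τ in t₀..v, ‖α τ‖ = ∫ τ in u..v, ‖α τ‖ :=
      intervalIntegral.integral_add_adjacent_intervals
        (hIIn u t₀ hu ht₀T) (hIIn t₀ v ht₀T hv)
    linarith
  -- ## Cauchy–Schwarz bound
  have hCS : ∀ u v : ℝ, 0 ≤ u → u ≤ v → v ≤ T →
      (∫ τ in u..v, ‖α τ‖) ≤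
        Real.sqrt (∫ τ in (0 : ℝ)..T, ‖α τ‖ ^ 2) * Real.sqrt (v - u) := by
    intro u v h0u huv hvT
    have hsub2 : Ioc u v ⊆ Icc (0 : ℝ) T := fun t ht => ⟨h0u.trans ht.1.le, ht.2.trans hvT⟩
    haveI : IsFiniteMeasure (volume.restrict (Ioc u v)) :=
      ⟨by rw [Measure.restrict_apply_univ, Real.volume_Ioc]; exact ENNReal.ofReal_lt_top⟩
    have hmle : volume.restrict (Ioc u v) ≤ volume.restrict (Icc (0 : ℝ) T) :=
      Measure.restrict_mono hsub2 le_rfl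
    have hof2 : (ENNReal.ofReal 2) = (2 : ENNReal) := by norm_num
    have hαm : MemLp (fun τ => ‖α τ‖) (ENNReal.ofReal 2) (volume.restrict (Ioc u v)) := by
      rw [hof2]; exact (hα.norm).mono_measure hmle
    have hone : MemLp (fun _ : ℝ => (1 : ℝ)) (ENNReal.ofReal 2) (volume.restrict (Ioc u v)) := by
      rw [hof2]; exact memLp_const 1
    have hconj : Real.HolderConjugate 2 2 := Real.HolderConjugate.two_two
    have H := integral_mul_le_Lp_mul_Lq_of_nonneg hconj
      (ae_of_all _ fun τ => norm_nonneg (α τ)) (ae_of_all _ fun _ => zero_le_one) hαm hone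
    have hL : (∫ τ in Ioc u v, ‖α τ‖ * 1) = ∫ τ in u..v, ‖α τ‖ := by
      rw [intervalIntegral.integral_of_le huv]
      simp
    have hone2 : (∫ τ in Ioc u v, (1 : ℝ) ^ (2 : ℝ)) ^ ((1 : ℝ) / 2) = Real.sqrt (v - u) := by
      simp only [Real.one_rpow]
      rw [setIntegral_const, smul_eq_mul, mul_one, Real.volume_real_Ioc_of_le huv,
        Real.sqrt_eq_rpow]
    have hsq2 : (∫ τ in Ioc u v, ‖α τ‖ ^ (2 : ℝ)) ≤ ∫ τ in (0 : ℝ)..T, ‖α τ‖ ^ 2 := by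
      have hre : (fun τ => ‖α τ‖ ^ (2 : ℝ)) = fun τ => ‖α τ‖ ^ 2 := by
        funext τ; rw [Real.rpow_two]
      rw [hre]
      have hmono : (∫ τ in Ioc u v, ‖α τ‖ ^ 2) ≤ ∫ τ in Icc (0 : ℝ) T, ‖α τ‖ ^ 2 := by
        apply setIntegral_mono_set hsqint
        · exact ae_of_all _ fun τ => sq_nonneg _
        · exact HasSubset.Subset.eventuallyLE hsub2
      rwa [integral_Icc_eq_integral_Ioc, ← intervalIntegral.integral_of_le hT.le] at hmono
    have hnn : (0 : ℝ) ≤ ∫ τ in Ioc u v, ‖α τ‖ ^ (2 : ℝ) :=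
      setIntegral_nonneg measurableSet_Ioc fun τ _ => Real.rpow_nonneg (norm_nonneg _) _
    calc (∫ τ in u..v, ‖α τ‖) = ∫ τ in Ioc u v, ‖α τ‖ * 1 := hL.symm
      _ ≤ (∫ τ in Ioc u v, ‖α τ‖ ^ (2 : ℝ)) ^ ((1 : ℝ) / 2) *
          (∫ τ in Ioc u v, (1 : ℝ) ^ (2 : ℝ)) ^ ((1 : ℝ) / 2) := H
      _ ≤ (∫ τ in (0 : ℝ)..T, ‖α τ‖ ^ 2) ^ ((1 : ℝ) / 2) * Real.sqrt (v - u) := by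
          rw [hone2]
          apply mul_le_mul_of_nonneg_right _ (Real.sqrt_nonneg _)
          exact Real.rpow_le_rpow hnn hsq2 (by norm_num)
      _ = Real.sqrt (∫ τ in (0 : ℝ)..T, ‖α τ‖ ^ 2) * Real.sqrt (v - u) := by
          rw [Real.sqrt_eq_rpow (∫ τ in (0 : ℝ)..T, ‖α τ‖ ^ 2)]
  -- ## Distance bound along the reference trajectory
  have hDle : ∀ u v : ℝ, u ∈ Icc (0 : ℝ) T → v ∈ Icc (0 : ℝ) T → u ≤ v →
      D (y u) (y v) ≤ ∫ τ in u..v, ‖α τ‖ := by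
    intro u v hu hv huv
    by_cases hsame : ∃ i, y u ∈ J i ∧ y v ∈ J i
    · rw [hDsame _ (hy2 u hu) _ (hy2 v hv) hsame, norm_sub_rev, hydiff u v hu hv]
      exact intervalIntegral.norm_integral_le_integral_norm huv
    · rw [hDdiff _ (hy2 u hu) _ (hy2 v hv) hsame]
      exact hcross u v hu hv huv hsame
  have hE0 : (0 : ℝ) ≤ ∫ τ in (0 : ℝ)..T, ‖α τ‖ ^ 2 :=
    intervalIntegral.integral_nonneg hT.le fun τ _ => sq_nonneg _
  -- ## Per-n work
  intro n
  have hδ0n : 0 ≤ δ n := by rw [hδ n]; exact abs_nonneg _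
  have hTd : 0 < T - δ n := sub_pos.2 (hδT n)
  set lam := T / (T - δ n) with hlamdef
  have hlam : 0 < lam := div_pos hT hTd
  have hTdlam : (T - δ n) * lam = T := by
    rw [hlamdef]; field_simp
  have hTlaminv : T / lam = T - δ n := by
    rw [hlamdef, div_div_eq_mul_div, mul_comm, mul_div_assoc, div_self hT.ne', mul_one]
  set c : EuclideanSpace ℝ (Fin d) := if b n ≤ a then e 0 else -e 0 with hcdef
  have hc1 : ‖c‖ = 1 := by
    rw [hcdef]
    by_cases hba : b n ≤ a
    · rw [if_pos hba, he 0]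
    · rw [if_neg hba, norm_neg, he 0]
  have hxeq : xn n + δ n • c = x := by
    rw [hcdef, hxn, hx]
    by_cases hba : b n ≤ a
    · have hδe : δ n = a - b n := by
        rw [hδ n, abs_of_nonpos (by linarith)]; ring
      rw [if_pos hba, hδe, ← add_smul]
      congr 1; ring
    · have hδe : δ n = b n - a := by
        rw [hδ n, abs_of_nonneg (by linarith [not_le.1 hba])]
      rw [if_neg hba, hδe, smul_neg, ← sub_eq_add_neg, ← sub_smul]
      congr 1; ring
  have hαn1 : ∀ τ : ℝ, τ ≤ δ n → αn n τ = c := by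
    intro τ h; rw [hαn, if_pos h, hcdef]
  have hαn2 : ∀ τ : ℝ, ¬ τ ≤ δ n → αn n τ = lam • α ((τ - δ n) * lam) := by
    intro τ h; rw [hαn, if_neg h, hlamdef]
  have hyn1 : ∀ s : ℝ, 0 ≤ s → s ≤ δ n → yn n s = xn n + s • c := by
    intro s h0 h1
    rw [hyn]
    congr 1
    have hEq : Set.EqOn (αn n) (fun _ => c) (uIcc 0 s) := by
      intro τ hτ
      rw [uIcc_of_le h0] at hτ
      exact hαn1 τ (hτ.2.trans h1)
    rw [intervalIntegral.integral_congr hEq, intervalIntegral.integral_const, sub_zero]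
  have hI0δ : (∫ τ in (0 : ℝ)..(δ n), αn n τ) = δ n • c := by
    have h1 := hyn1 (δ n) hδ0n le_rfl
    rw [hyn] at h1
    exact add_left_cancel h1
  have hIA1 : IntervalIntegrable (αn n) volume 0 (δ n) := by
    rw [intervalIntegrable_iff_integrableOn_Ioc_of_le hδ0n]
    have hconst : IntegrableOn (fun _ : ℝ => c) (Ioc 0 (δ n)) volume :=
      integrableOn_const (by rw [Real.volume_Ioc]; exact ENNReal.ofReal_ne_top)
    apply Integrable.congr hconst
    filter_upwards [ae_restrict_mem measurableSet_Ioc] with τ hτ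
    exact (hαn1 τ hτ.2).symm
  have hg2 : IntervalIntegrable (fun τ => lam • α ((τ - δ n) * lam)) volume (δ n) T := by
    have h0 : IntervalIntegrable α volume 0 T := hII 0 T ⟨le_rfl, hT.le⟩ ⟨hT.le, le_rfl⟩
    have h1 := (h0.comp_mul_right (c := lam)).comp_sub_right (δ n)
    rw [zero_div, zero_add, hTlaminv, sub_add_cancel] at h1
    exact h1.smul lam
  have hIA2 : IntervalIntegrable (αn n) volume (δ n) T := by
    rw [intervalIntegrable_iff_integrableOn_Ioc_of_le (hδT n).le]
    apply Integrable.congr ((intervalIntegrable_iff_integrableOn_Ioc_of_le (hδT n).le).1 hg2)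
    filter_upwards [ae_restrict_mem measurableSet_Ioc] with τ hτ
    exact (hαn2 τ (not_le.2 hτ.1)).symm
  have hint2 : ∀ s : ℝ, δ n ≤ s →
      (∫ τ in (δ n)..s, αn n τ) = ∫ τ in (0 : ℝ)..((s - δ n) * lam), α τ := by
    intro s h1
    calc (∫ τ in (δ n)..s, αn n τ)
        = ∫ τ in (δ n)..s, lam • α ((τ - δ n) * lam) := by
          apply intervalIntegral.integral_congr_ae
          apply ae_of_all
          intro τ hτ
          rw [uIoc_of_le h1] at hτ
          exact hαn2 τ (not_le.2 hτ.1)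
      _ = lam • ∫ τ in (δ n)..s, α ((τ - δ n) * lam) := intervalIntegral.integral_smul lam _
      _ = lam • ∫ τ in (0 : ℝ)..(s - δ n), α (τ * lam) := by
          rw [intervalIntegral.integral_comp_sub_right (fun τ => α (τ * lam)) (δ n), sub_self]
      _ = ∫ τ in (0 : ℝ)..((s - δ n) * lam), α τ := by
          rw [intervalIntegral.smul_integral_comp_mul_right, zero_mul]
  have hargmem : ∀ s : ℝ, δ n ≤ s → s ≤ T → (s - δ n) * lam ∈ Icc (0 : ℝ) T := by
    intro s h1 h2
    constructor
    · exact mul_nonneg (sub_nonneg.2 h1) hlam.le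
    · calc (s - δ n) * lam ≤ (T - δ n) * lam :=
          mul_le_mul_of_nonneg_right (sub_le_sub_right h2 _) hlam.le
        _ = T := hTdlam
  have hyn2 : ∀ s : ℝ, δ n ≤ s → s ≤ T → yn n s = y ((s - δ n) * lam) := by
    intro s h1 h2
    rw [hy1 _ (hargmem s h1 h2), hyn]
    have hadd : (∫ τ in (0 : ℝ)..(δ n), αn n τ) + ∫ τ in (δ n)..s, αn n τ
        = ∫ τ in (0 : ℝ)..s, αn n τ :=
      intervalIntegral.integral_add_adjacent_intervals hIA1
        (hIA2.mono_set (uIcc_subset_uIcc left_mem_uIcc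
          (by rw [uIcc_of_le (hδT n).le]; exact ⟨h1, h2⟩)))
    rw [← hadd, hI0δ, hint2 s h1, ← add_assoc, hxeq]
  -- membership of the approximating curve on the initial segment
  have hynJ : ∀ s : ℝ, 0 ≤ s → s ≤ δ n → yn n s ∈ J 0 := by
    intro s h0 h1
    rw [hyn1 s h0 h1, hxn, hcdef, hJ 0]
    by_cases hba : b n ≤ a
    · refine ⟨b n + s, by linarith [hb n], ?_⟩
      rw [if_pos hba, add_smul]
    · have hδe : δ n = b n - a := by
        rw [hδ n, abs_of_nonneg (by linarith [not_le.1 hba])]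
      refine ⟨b n - s, by linarith [hδe ▸ h1], ?_⟩
      rw [if_neg hba, smul_neg, ← sub_eq_add_neg, sub_smul]
  -- the four conclusions
  have hsδT : δ n ≤ T := (hδT n).le
  refine ⟨⟨?_, ?_⟩, ?_, ?_, ?_⟩
  · -- MemLp
    have hn2 : IntervalIntegrable (fun τ => ‖αn n τ‖ ^ 2) volume (δ n) T := by
      have h0 : IntervalIntegrable (fun τ => ‖α τ‖ ^ 2) volume 0 T :=
        hIIs 0 T ⟨le_rfl, hT.le⟩ ⟨hT.le, le_rfl⟩
      have h1 := ((h0.comp_mul_right (c := lam)).comp_sub_right (δ n)).const_mul (lam ^ 2)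
      rw [zero_div, zero_add, hTlaminv, sub_add_cancel] at h1
      rw [intervalIntegrable_iff_integrableOn_Ioc_of_le hsδT]
      apply Integrable.congr ((intervalIntegrable_iff_integrableOn_Ioc_of_le hsδT).1 h1)
      filter_upwards [ae_restrict_mem measurableSet_Ioc] with τ hτ
      rw [hαn2 τ (not_le.2 hτ.1), norm_smul, Real.norm_eq_abs, abs_of_pos hlam, mul_pow]
    have hsqa : IntegrableOn (fun τ => ‖αn n τ‖ ^ 2) (Icc (0 : ℝ) T) volume := by
      rw [← Icc_union_Ioc_eq_Icc hδ0n hsδT]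
      apply IntegrableOn.union
      · have hconst : IntegrableOn (fun _ : ℝ => (1 : ℝ)) (Icc 0 (δ n)) volume :=
          integrableOn_const (by rw [Real.volume_Icc]; exact ENNReal.ofReal_ne_top)
        apply Integrable.congr hconst
        filter_upwards [ae_restrict_mem measurableSet_Icc] with τ hτ
        rw [hαn1 τ hτ.2, hc1, one_pow]
      · exact (intervalIntegrable_iff_integrableOn_Ioc_of_le hsδT).1 hn2
    have haes : IntegrableOn (αn n) (Icc (0 : ℝ) T) volume := by
      rw [← Icc_union_Ioc_eq_Icc hδ0n hsδT]
      apply IntegrableOn.union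
      · have hconst : IntegrableOn (fun _ : ℝ => c) (Icc 0 (δ n)) volume :=
          integrableOn_const (by rw [Real.volume_Icc]; exact ENNReal.ofReal_ne_top)
        apply Integrable.congr hconst
        filter_upwards [ae_restrict_mem measurableSet_Icc] with τ hτ
        exact (hαn1 τ hτ.2).symm
      · exact (intervalIntegrable_iff_integrableOn_Ioc_of_le hsδT).1 hIA2
    exact (memLp_two_iff_integrable_sq_norm haes.aestronglyMeasurable).2 hsqa
  · -- membership in G
    intro s hs
    by_cases hsδ : s ≤ δ n
    · exact hJsubG 0 (hynJ s hs.1 hsδ)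
    · rw [hyn2 s (not_le.1 hsδ).le hs.2]
      exact hy2 _ (hargmem s (not_le.1 hsδ).le hs.2)
  · -- endpoint
    rw [hyn2 T hsδT le_rfl, hTdlam]
  · -- distance bound
    intro s hs
    by_cases hsδ : s ≤ δ n
    · have hynG : yn n s ∈ G := hJsubG 0 (hynJ s hs.1 hsδ)
      have hysG : y s ∈ G := hy2 s hs
      have hs0 : (0 : ℝ) ≤ s := hs.1
      have hd1 : ‖yn n s - x‖ ≤ δ n := by
        rw [hyn1 s hs.1 hsδ, ← hxeq, add_sub_add_left_eq_sub, ← sub_smul, norm_smul,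
          Real.norm_eq_abs, hc1, mul_one, abs_of_nonpos (by linarith)]
        linarith
      have hsT : s ∈ Icc (0 : ℝ) T := hs
      have hCS0s : (∫ τ in (0 : ℝ)..s, ‖α τ‖) ≤
          Real.sqrt (∫ τ in (0 : ℝ)..T, ‖α τ‖ ^ 2) * Real.sqrt (δ n) := by
        calc (∫ τ in (0 : ℝ)..s, ‖α τ‖)
            ≤ Real.sqrt (∫ τ in (0 : ℝ)..T, ‖α τ‖ ^ 2) * Real.sqrt (s - 0) :=
              hCS 0 s le_rfl hs.1 hs.2
          _ ≤ Real.sqrt (∫ τ in (0 : ℝ)..T, ‖α τ‖ ^ 2) * Real.sqrt (δ n) := by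
              apply mul_le_mul_of_nonneg_left _ (Real.sqrt_nonneg _)
              exact Real.sqrt_le_sqrt (by linarith)
      have hd2 : ‖y s - x‖ ≤ ∫ τ in (0 : ℝ)..s, ‖α τ‖ := by
        have := hydiff 0 s ⟨le_rfl, hT.le⟩ hsT
        rw [hy0] at this
        rw [this]
        exact intervalIntegral.norm_integral_le_integral_norm hs.1
      by_cases hsame : ∃ i, yn n s ∈ J i ∧ y s ∈ J i
      · rw [hDsame _ hynG _ hysG hsame]
        calc ‖yn n s - y s‖ ≤ ‖yn n s - x‖ + ‖x - y s‖ :=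
              norm_sub_le_norm_sub_add_norm_sub _ _ _
          _ ≤ δ n + Real.sqrt (∫ τ in (0 : ℝ)..T, ‖α τ‖ ^ 2) * Real.sqrt (δ n) := by
              rw [norm_sub_rev x (y s)]
              exact add_le_add hd1 (hd2.trans hCS0s)
      · rw [hDdiff _ hynG _ hysG hsame]
        have hxys : ‖x‖ + ‖y s‖ ≤ ∫ τ in (0 : ℝ)..s, ‖α τ‖ := by
          by_cases h0 : ∃ i, y 0 ∈ J i ∧ y s ∈ J i
          · obtain ⟨i, hxi, hysi⟩ := h0
            rw [hy0] at hxi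
            by_cases hx0 : x = 0
            · rw [hx0, norm_zero, zero_add]
              have h2 := hd2
              rw [hx0, sub_zero] at h2
              exact h2
            · have hi0 : i = 0 := by
                by_contra hne0
                exact hx0 (hJint i 0 hne0 x hxi (hx ▸ (hJ 0) ▸ ⟨a, ha, rfl⟩))
              exact absurd ⟨0, hynJ s hs.1 hsδ, hi0 ▸ hysi⟩ hsame
          · have := hcross 0 s ⟨le_rfl, hT.le⟩ hsT hs.1 h0
            rwa [hy0] at this
        have hyns : ‖yn n s‖ ≤ ‖x‖ + ‖yn n s - x‖ := by
          calc ‖yn n s‖ = ‖x + (yn n s - x)‖ := by rw [add_sub_cancel]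
            _ ≤ ‖x‖ + ‖yn n s - x‖ := norm_add_le _ _
        linarith
    · have hδs : δ n ≤ s := (not_le.1 hsδ).le
      rw [hyn2 s hδs hs.2]
      set s' := (s - δ n) * lam with hs'def
      have hs'mem : s' ∈ Icc (0 : ℝ) T := hargmem s hδs hs.2
      have hs'les : s' ≤ s := by
        rw [hs'def, hlamdef, ← mul_div_assoc, div_le_iff₀ hTd]
        nlinarith [hs.2, hδ0n]
      have hss' : s - s' ≤ δ n := by
        have h1 : s - δ n ≤ s' := by
          rw [hs'def, hlamdef, ← mul_div_assoc, le_div_iff₀ hTd]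
          nlinarith [sub_nonneg.2 hδs, hδ0n]
        linarith
      calc D (y s') (y s) ≤ ∫ τ in s'..s, ‖α τ‖ := hDle s' s hs'mem hs hs'les
        _ ≤ Real.sqrt (∫ τ in (0 : ℝ)..T, ‖α τ‖ ^ 2) * Real.sqrt (s - s') :=
            hCS s' s hs'mem.1 hs'les hs.2
        _ ≤ Real.sqrt (∫ τ in (0 : ℝ)..T, ‖α τ‖ ^ 2) * Real.sqrt (δ n) := by
            apply mul_le_mul_of_nonneg_left _ (Real.sqrt_nonneg _)
            exact Real.sqrt_le_sqrt hss'
        _ ≤ δ n + Real.sqrt (∫ τ in (0 : ℝ)..T, ‖α τ‖ ^ 2) * Real.sqrt (δ n) := by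
            linarith
  · -- energy bound
    have hn1 : (∫ τ in (0 : ℝ)..(δ n), ‖αn n τ‖ ^ 2) = δ n := by
      have hEq : Set.EqOn (fun τ => ‖αn n τ‖ ^ 2) (fun _ => (1 : ℝ)) (uIcc 0 (δ n)) := by
        intro τ hτ
        rw [uIcc_of_le hδ0n] at hτ
        simp only
        rw [hαn1 τ hτ.2, hc1, one_pow]
      rw [intervalIntegral.integral_congr hEq, intervalIntegral.integral_const, sub_zero,
        smul_eq_mul, mul_one]
    have hn1' : IntervalIntegrable (fun τ => ‖αn n τ‖ ^ 2) volume 0 (δ n) := by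
      rw [intervalIntegrable_iff_integrableOn_Ioc_of_le hδ0n]
      have hconst : IntegrableOn (fun _ : ℝ => (1 : ℝ)) (Ioc 0 (δ n)) volume :=
        integrableOn_const (by rw [Real.volume_Ioc]; exact ENNReal.ofReal_ne_top)
      apply Integrable.congr hconst
      filter_upwards [ae_restrict_mem measurableSet_Ioc] with τ hτ
      rw [hαn1 τ hτ.2, hc1, one_pow]
    have hn2' : IntervalIntegrable (fun τ => ‖αn n τ‖ ^ 2) volume (δ n) T := by
      have h0 : IntervalIntegrable (fun τ => ‖α τ‖ ^ 2) volume 0 T :=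
        hIIs 0 T ⟨le_rfl, hT.le⟩ ⟨hT.le, le_rfl⟩
      have h1 := ((h0.comp_mul_right (c := lam)).comp_sub_right (δ n)).const_mul (lam ^ 2)
      rw [zero_div, zero_add, hTlaminv, sub_add_cancel] at h1
      rw [intervalIntegrable_iff_integrableOn_Ioc_of_le hsδT]
      apply Integrable.congr ((intervalIntegrable_iff_integrableOn_Ioc_of_le hsδT).1 h1)
      filter_upwards [ae_restrict_mem measurableSet_Ioc] with τ hτ
      rw [hαn2 τ (not_le.2 hτ.1), norm_smul, Real.norm_eq_abs, abs_of_pos hlam, mul_pow]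
    have hn2v : (∫ τ in (δ n)..T, ‖αn n τ‖ ^ 2)
        = lam * ∫ τ in (0 : ℝ)..T, ‖α τ‖ ^ 2 := by
      calc (∫ τ in (δ n)..T, ‖αn n τ‖ ^ 2)
          = ∫ τ in (δ n)..T, lam ^ 2 * ‖α ((τ - δ n) * lam)‖ ^ 2 := by
            apply intervalIntegral.integral_congr_ae
            apply ae_of_all
            intro τ hτ
            rw [uIoc_of_le hsδT] at hτ
            rw [hαn2 τ (not_le.2 hτ.1), norm_smul, Real.norm_eq_abs, abs_of_pos hlam, mul_pow]
        _ = lam ^ 2 * ∫ τ in (δ n)..T, ‖α ((τ - δ n) * lam)‖ ^ 2 := by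
            rw [intervalIntegral.integral_const_mul]
        _ = lam ^ 2 * ∫ τ in (0 : ℝ)..(T - δ n), ‖α (τ * lam)‖ ^ 2 := by
            rw [intervalIntegral.integral_comp_sub_right (fun τ => ‖α (τ * lam)‖ ^ 2) (δ n),
              sub_self]
        _ = lam ^ 2 * (lam⁻¹ • ∫ τ in (0 : ℝ)..((T - δ n) * lam), ‖α τ‖ ^ 2) := by
            rw [intervalIntegral.integral_comp_mul_right (fun τ => ‖α τ‖ ^ 2) hlam.ne',
              zero_mul]
        _ = lam * ∫ τ in (0 : ℝ)..T, ‖α τ‖ ^ 2 := by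
            rw [hTdlam, smul_eq_mul, ← mul_assoc, sq]
            congr 1
            field_simp
    have hadd : (∫ τ in (0 : ℝ)..(δ n), ‖αn n τ‖ ^ 2) + ∫ τ in (δ n)..T, ‖αn n τ‖ ^ 2
        = ∫ τ in (0 : ℝ)..T, ‖αn n τ‖ ^ 2 :=
      intervalIntegral.integral_add_adjacent_intervals hn1' hn2'
    have hlamE : ∀ E : ℝ, lam * E = E + δ n * E / (T - δ n) := by
      intro E
      have hne : T - δ n ≠ 0 := hTd.ne'
      rw [hlamdef]
      field_simp
      ring
    rw [← hadd, hn1, hn2v, hlamE]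
    apply le_of_eq
    ring
end

section
/- Dynamic programming principle on a junction: for every (x,t) ∈ 𝒢 × [0,T] and t̄ ∈ [t,T], u(x,t) = inf over admissible trajectories (y,α) on [t,t̄] starting from x of { u(y(t̄), t̄) + ∫_t^{t̄} [ L(y(τ),τ) + |α(τ)|²/2 ] dτ }. -/
open Set MeasureTheory

section Aux
variable {d N : ℕ}
local notation "E" => EuclideanSpace ℝ (Fin d)

lemma aux_ray_closed (e : E) (he : ‖e‖ = 1) :
    IsClosed {p : E | ∃ r : ℝ, 0 ≤ r ∧ p = r • e} := by
  have h : {p : E | ∃ r : ℝ, 0 ≤ r ∧ p = r • e} = {p : E | p = ‖p‖ • e} := by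
    ext p
    constructor
    · rintro ⟨r, hr, rfl⟩
      simp [norm_smul, abs_of_nonneg hr, he]
    · intro h; exact ⟨‖p‖, norm_nonneg _, h⟩
  rw [h]
  exact isClosed_eq continuous_id (continuous_norm.smul continuous_const)

lemma aux_ray_unique {N : ℕ} (e : Fin (N+1) → E) (he : ∀ i, ‖e i‖ = 1)
    (hinj : Function.Injective e)
    {z : E} (hz : z ≠ 0) {i j : Fin (N+1)}
    (hi : ∃ r : ℝ, 0 ≤ r ∧ z = r • e i) (hj : ∃ r : ℝ, 0 ≤ r ∧ z = r • e j) :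
    i = j := by
  obtain ⟨r, hr, hri⟩ := hi
  obtain ⟨s, hs, hsj⟩ := hj
  have hrn : ‖z‖ = r := by
    rw [hri, norm_smul, he, Real.norm_eq_abs, abs_of_nonneg hr, mul_one]
  have hsn : ‖z‖ = s := by
    rw [hsj, norm_smul, he, Real.norm_eq_abs, abs_of_nonneg hs, mul_one]
  have hr0 : r ≠ 0 := by
    rintro rfl; apply hz; rw [hri, zero_smul]
  have hrs : r = s := hrn ▸ hsn
  have : r • e i = r • e j := by rw [← hri, hrs]; exact hsj
  exact hinj (smul_right_injective _ hr0 this)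



-- pointwise bound on L over G
lemma aux_L_bound (e : Fin (N+1) → E)
    (J : Fin (N+1) → Set E) (hJ : ∀ i, J i = {p | ∃ r : ℝ, 0 ≤ r ∧ p = r • e i})
    (G : Set E) (hG : G = ⋃ i, J i)
    (ℓ : Fin (N+1) → E → ℝ → ℝ) (ℓs : ℝ → ℝ)
    (L : E → ℝ → ℝ)
    (hL : ∀ i, ∀ x ∈ J i \ {0}, ∀ t, L x t = ℓ i x t)
    (hLO : ∀ t, L 0 t = min (ℓs t) (Finset.univ.inf' Finset.univ_nonempty fun i => ℓ i 0 t))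
    (M : ℝ) (hM : ∀ i x t, |ℓ i x t| ≤ M) (hMs : ∀ t, |ℓs t| ≤ M) :
    ∀ z ∈ G, ∀ t, |L z t| ≤ M := by
  intro z hz t
  by_cases h0 : z = 0
  · subst h0
    rw [hLO]
    rw [abs_le]
    constructor
    · apply le_min
      · exact (abs_le.1 (hMs t)).1
      · apply Finset.le_inf'
        intro i _
        exact (abs_le.1 (hM i 0 t)).1
    · exact le_trans (min_le_left _ _) (abs_le.1 (hMs t)).2
  · rw [hG] at hz
    obtain ⟨i, hi⟩ := mem_iUnion.1 hz
    rw [hL i z ⟨hi, h0⟩ t]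
    exact hM i z t

-- integrability of L along a continuous curve in G
lemma aux_integrableOn_L (e : Fin (N+1) → E) (he : ∀ i, ‖e i‖ = 1)
    (hinj : Function.Injective e)
    (J : Fin (N+1) → Set E) (hJ : ∀ i, J i = {p | ∃ r : ℝ, 0 ≤ r ∧ p = r • e i})
    (G : Set E) (hG : G = ⋃ i, J i)
    (ℓ : Fin (N+1) → E → ℝ → ℝ) (ℓs : ℝ → ℝ)
    (hℓcont : ∀ i, Continuous fun p : E × ℝ => ℓ i p.1 p.2)
    (hℓscont : Continuous ℓs)
    (L : E → ℝ → ℝ)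
    (hL : ∀ i, ∀ x ∈ J i \ {0}, ∀ t, L x t = ℓ i x t)
    (hLO : ∀ t, L 0 t = min (ℓs t) (Finset.univ.inf' Finset.univ_nonempty fun i => ℓ i 0 t))
    (M : ℝ) (hM : ∀ i x t, |ℓ i x t| ≤ M) (hMs : ∀ t, |ℓs t| ≤ M)
    (Z : ℝ → E) (hZ : Continuous Z) (a b : ℝ)
    (hZG : ∀ τ ∈ Icc a b, Z τ ∈ G) :
    IntegrableOn (fun τ => L (Z τ) τ) (Icc a b) volume := by
  classical
  set Ψ : ℝ → ℝ := fun τ =>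
    (∑ i : Fin (N+1), (Z ⁻¹' (J i \ {0})).indicator (fun σ => ℓ i (Z σ) σ) τ)
    + (Z ⁻¹' {0}).indicator
        (fun σ => min (ℓs σ) (Finset.univ.inf' Finset.univ_nonempty fun i => ℓ i 0 σ)) τ
    with hΨ
  have hJmeas : ∀ i, MeasurableSet (Z ⁻¹' (J i \ {0})) := by
    intro i
    rw [preimage_diff]
    refine MeasurableSet.diff ?_ ?_
    · rw [hJ i]
      exact ((aux_ray_closed (e i) (he i)).preimage hZ).measurableSet
    · exact (isClosed_singleton.preimage hZ).measurableSet
  have hΨmeas : Measurable Ψ := by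
    apply Measurable.add
    · apply Finset.measurable_sum
      intro i _
      apply Measurable.indicator
      · exact ((hℓcont i).comp (hZ.prodMk continuous_id)).measurable
      · exact hJmeas i
    · apply Measurable.indicator
      · apply Measurable.min hℓscont.measurable
        apply Continuous.measurable
        apply Continuous.finset_inf'_apply
        intro i _
        exact (hℓcont i).comp (continuous_const.prodMk continuous_id)
      · exact (isClosed_singleton.preimage hZ).measurableSet
  have heq : ∀ τ ∈ Icc a b, L (Z τ) τ = Ψ τ := by
    intro τ hτ
    have hzG := hZG τ hτ
    by_cases h0 : Z τ = 0
    · rw [hΨ]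
      simp only
      rw [Finset.sum_eq_zero, indicator_of_mem (by simpa [mem_preimage] using h0), zero_add,
        h0, hLO]
      intro i _
      apply indicator_of_notMem
      rw [mem_preimage, h0]
      rintro ⟨-, hmem⟩
      exact hmem rfl
    · rw [hG] at hzG
      obtain ⟨i, hi⟩ := mem_iUnion.1 hzG
      rw [hΨ]
      simp only
      rw [indicator_of_notMem (by simpa [mem_preimage] using h0), add_zero,
        Finset.sum_eq_single_of_mem i (Finset.mem_univ i)]
      · rw [indicator_of_mem (by exact ⟨hi, h0⟩), hL i _ ⟨hi, h0⟩]
      · intro j _ hji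
        apply indicator_of_notMem
        rintro ⟨hj, -⟩
        exact hji (aux_ray_unique e he hinj h0 (by rw [hJ j] at hj; exact hj)
          (by rw [hJ i] at hi; exact hi))
  have hint : IntegrableOn Ψ (Icc a b) volume := by
    apply Integrable.mono' (g := fun _ : ℝ => M)
    · exact integrableOn_const measure_Icc_lt_top.ne
    · exact hΨmeas.aestronglyMeasurable
    · rw [ae_restrict_iff' measurableSet_Icc]
      refine ae_of_all _ fun τ hτ => ?_
      rw [← heq τ hτ]
      exact aux_L_bound e J hJ G hG ℓ ℓs L hL hLO M hM hMs _ (hZG τ hτ) τ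
  exact (hint.congr_fun (fun τ hτ => (heq τ hτ).symm) measurableSet_Icc : _)


-- integrability of the running cost along an admissible trajectory
lemma aux_traj_integrable (e : Fin (N+1) → E) (he : ∀ i, ‖e i‖ = 1)
    (hinj : Function.Injective e)
    (J : Fin (N+1) → Set E) (hJ : ∀ i, J i = {p | ∃ r : ℝ, 0 ≤ r ∧ p = r • e i})
    (G : Set E) (hG : G = ⋃ i, J i)
    (ℓ : Fin (N+1) → E → ℝ → ℝ) (ℓs : ℝ → ℝ)
    (hℓcont : ∀ i, Continuous fun p : E × ℝ => ℓ i p.1 p.2)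
    (hℓscont : Continuous ℓs)
    (L : E → ℝ → ℝ)
    (hL : ∀ i, ∀ x ∈ J i \ {0}, ∀ t, L x t = ℓ i x t)
    (hLO : ∀ t, L 0 t = min (ℓs t) (Finset.univ.inf' Finset.univ_nonempty fun i => ℓ i 0 t))
    (M : ℝ) (hM : ∀ i x t, |ℓ i x t| ≤ M) (hMs : ∀ t, |ℓs t| ≤ M)
    (x : E) (a b : ℝ)
    (y α : ℝ → E)
    (hα : MemLp α 2 (volume.restrict (Icc a b)))
    (hy : ∀ s ∈ Icc a b, (y s = x + ∫ τ in a..s, α τ) ∧ y s ∈ G) :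
    IntegrableOn (fun τ => L (y τ) τ + ‖α τ‖ ^ 2 / 2) (Icc a b) volume := by
  haveI : IsFiniteMeasure (volume.restrict (Icc a b)) :=
    ⟨by rw [Measure.restrict_apply_univ]; exact measure_Icc_lt_top⟩
  have hαint : IntegrableOn α (Icc a b) volume := hα.integrable (by norm_num)
  have hsq : IntegrableOn (fun τ => ‖α τ‖ ^ 2) (Icc a b) volume :=
    (memLp_two_iff_integrable_sq_norm hα.aestronglyMeasurable).1 hα
  set β := (Icc a b).indicator α with hβdef
  have hβ : Integrable β volume := (integrable_indicator_iff measurableSet_Icc).2 hαint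
  set Z : ℝ → E := fun s => x + ∫ τ in a..s, β τ with hZdef
  have hZcont : Continuous Z :=
    continuous_const.add (intervalIntegral.continuous_primitive
      (fun c d' => hβ.intervalIntegrable) a)
  have hZeq : ∀ s ∈ Icc a b, Z s = y s := by
    intro s hs
    have h1 : (∫ τ in a..s, β τ) = ∫ τ in a..s, α τ := by
      apply intervalIntegral.integral_congr
      intro τ hτ
      rw [uIcc_of_le hs.1] at hτ
      rw [hβdef]
      have hmem : τ ∈ Icc a b := ⟨hτ.1, hτ.2.trans hs.2⟩
      exact indicator_of_mem hmem α
    show x + (∫ τ in a..s, β τ) = y s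
    rw [h1, (hy s hs).1]
  have hZG : ∀ τ ∈ Icc a b, Z τ ∈ G := by
    intro τ hτ
    rw [hZeq τ hτ]
    exact (hy τ hτ).2
  have hLint := aux_integrableOn_L e he hinj J hJ G hG ℓ ℓs hℓcont hℓscont L hL hLO
    M hM hMs Z hZcont a b hZG
  have hLy : IntegrableOn (fun τ => L (y τ) τ) (Icc a b) volume :=
    hLint.congr_fun (fun τ hτ => by show L (Z τ) τ = _; rw [hZeq τ hτ]) measurableSet_Icc
  exact hLy.add (hsq.div_const 2)


lemma aux_int_of {X : Type*} [NormedAddCommGroup X] (a b : ℝ) (f : ℝ → X)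
    (hf : MemLp f 2 (volume.restrict (Icc a b))) : IntegrableOn f (Icc a b) volume := by
  haveI : IsFiniteMeasure (volume.restrict (Icc a b)) :=
    ⟨by rw [Measure.restrict_apply_univ]; exact measure_Icc_lt_top⟩
  exact hf.integrable one_le_two

lemma aux_II {X : Type*} [NormedAddCommGroup X] {f : ℝ → X} {a b a' b' : ℝ}
    (hf : IntegrableOn f (Icc a b) volume) (h1 : a ≤ a') (h2 : a' ≤ b') (h3 : b' ≤ b) :
    IntervalIntegrable f volume a' b' := by
  apply IntegrableOn.intervalIntegrable
  rw [uIcc_of_le h2]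
  exact hf.mono_set (Icc_subset_Icc h1 h3)

end Aux

/-- Dynamic programming principle on the junction. -/
theorem stmt_11 {d N : ℕ} (T : ℝ) (hT : 0 < T)
    (e : Fin (N + 1) → EuclideanSpace ℝ (Fin d))
    (he : ∀ i, ‖e i‖ = 1) (hinj : Function.Injective e)
    (J : Fin (N + 1) → Set (EuclideanSpace ℝ (Fin d)))
    (hJ : ∀ i, J i = {p | ∃ r : ℝ, 0 ≤ r ∧ p = r • e i})
    (G : Set (EuclideanSpace ℝ (Fin d)))
    (hG : G = ⋃ i, J i)
    -- running costs on the edges, at the vertex, and terminal costs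
    (ℓ : Fin (N + 1) → EuclideanSpace ℝ (Fin d) → ℝ → ℝ) (ℓs : ℝ → ℝ)
    (g : Fin (N + 1) → EuclideanSpace ℝ (Fin d) → ℝ) (gs : ℝ)
    (hℓcont : ∀ i, Continuous fun p : EuclideanSpace ℝ (Fin d) × ℝ => ℓ i p.1 p.2)
    (hℓscont : Continuous ℓs)
    (hgcont : ∀ i, Continuous (g i))
    (hℓbd : ∃ M, ∀ i x t, |ℓ i x t| ≤ M)
    (hℓsbd : ∃ M, ∀ t, |ℓs t| ≤ M)
    (hgbd : ∃ M, ∀ i x, |g i x| ≤ M)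
    -- the aggregated running cost `L` and terminal cost `gT`
    (L : EuclideanSpace ℝ (Fin d) → ℝ → ℝ)
    (hL : ∀ i, ∀ x ∈ J i \ {0}, ∀ t, L x t = ℓ i x t)
    (hLO : ∀ t, L 0 t =
      min (ℓs t) (Finset.univ.inf' Finset.univ_nonempty fun i => ℓ i 0 t))
    (gT : EuclideanSpace ℝ (Fin d) → ℝ)
    (hgT : ∀ i, ∀ x ∈ J i \ {0}, gT x = g i x)
    (hgTO : gT 0 = min gs (Finset.univ.inf' Finset.univ_nonempty fun i => g i 0))
    -- admissible trajectories starting from `x` at time `t`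
    (Γ : ℝ → EuclideanSpace ℝ (Fin d) →
      Set ((ℝ → EuclideanSpace ℝ (Fin d)) × (ℝ → EuclideanSpace ℝ (Fin d))))
    (hΓ : ∀ t x, Γ t x = {p | MemLp p.2 2 (volume.restrict (Icc t T)) ∧
        ∀ s ∈ Icc t T, (p.1 s = x + ∫ τ in t..s, p.2 τ) ∧ p.1 s ∈ G})
    -- the cost functional and the value function
    (Jc : ℝ → EuclideanSpace ℝ (Fin d) →
      ((ℝ → EuclideanSpace ℝ (Fin d)) × (ℝ → EuclideanSpace ℝ (Fin d))) → ℝ)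
    (hJc : ∀ t x p, Jc t x p =
      (∫ τ in t..T, (L (p.1 τ) τ + ‖p.2 τ‖ ^ 2 / 2)) + gT (p.1 T))
    (u : EuclideanSpace ℝ (Fin d) → ℝ → ℝ)
    (hu : ∀ x t, u x t = sInf (Jc t x '' Γ t x))
    -- admissible trajectories on the sub-interval `[t, t̄]` starting from `x`
    (Γseg : ℝ → ℝ → EuclideanSpace ℝ (Fin d) →
      Set ((ℝ → EuclideanSpace ℝ (Fin d)) × (ℝ → EuclideanSpace ℝ (Fin d))))
    (hΓseg : ∀ t tb x, Γseg t tb x = {p | MemLp p.2 2 (volume.restrict (Icc t tb)) ∧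
        ∀ s ∈ Icc t tb, (p.1 s = x + ∫ τ in t..s, p.2 τ) ∧ p.1 s ∈ G}) :
    ∀ x ∈ G, ∀ t ∈ Icc (0 : ℝ) T, ∀ tb ∈ Icc t T,
      u x t = sInf ((fun p : (ℝ → EuclideanSpace ℝ (Fin d)) × (ℝ → EuclideanSpace ℝ (Fin d)) =>
        u (p.1 tb) tb + ∫ τ in t..tb, (L (p.1 τ) τ + ‖p.2 τ‖ ^ 2 / 2)) '' Γseg t tb x) := by
  classical
  obtain ⟨M1, hM1⟩ := hℓbd
  obtain ⟨M2, hM2⟩ := hℓsbd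
  obtain ⟨M3, hM3⟩ := hgbd
  set M : ℝ := max M1 M2 with hMdef
  have hM : ∀ i z τ, |ℓ i z τ| ≤ M := fun i z τ => (hM1 i z τ).trans (le_max_left _ _)
  have hMs : ∀ τ, |ℓs τ| ≤ M := fun τ => (hM2 τ).trans (le_max_right _ _)
  have hM0 : 0 ≤ M := (abs_nonneg _).trans (hMs 0)
  set Mg : ℝ := max M3 |gs| with hMgdef
  have hMg0 : 0 ≤ Mg := le_trans (abs_nonneg gs) (le_max_right _ _)
  -- bound on gT over G
  have hgTbd : ∀ z ∈ G, |gT z| ≤ Mg := by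
    intro z hz
    by_cases h0 : z = 0
    · subst h0
      rw [hgTO, abs_le]
      constructor
      · apply le_min
        · have h1 := neg_abs_le gs
          have h2 : |gs| ≤ Mg := le_max_right M3 |gs|
          linarith
        · apply Finset.le_inf'
          intro i _
          have h1 := (abs_le.1 (hM3 i 0)).1
          have h2 : M3 ≤ Mg := le_max_left M3 |gs|
          linarith
      · exact (min_le_left _ _).trans ((le_abs_self gs).trans (le_max_right _ _))
    · rw [hG] at hz
      obtain ⟨i, hi⟩ := Set.mem_iUnion.1 hz
      rw [hgT i z ⟨hi, h0⟩]
      exact (hM3 i z).trans (le_max_left _ _)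
  -- bound on L over G
  have hLbd : ∀ z ∈ G, ∀ τ, |L z τ| ≤ M := aux_L_bound e J hJ G hG ℓ ℓs L hL hLO M hM hMs
  intro x hx t ht tb htb
  have htT : t ≤ T := ht.2
  have h0t : 0 ≤ t := ht.1
  have htb1 : t ≤ tb := htb.1
  have htbT : tb ≤ T := htb.2
  have h0tb : 0 ≤ tb := h0t.trans htb1
  -- integrability of the running cost along admissible trajectories
  have key_int : ∀ (a b : ℝ) (x' : EuclideanSpace ℝ (Fin d))
      (y α : ℝ → EuclideanSpace ℝ (Fin d)),
      MemLp α 2 (volume.restrict (Icc a b)) →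
      (∀ s ∈ Icc a b, (y s = x' + ∫ τ in a..s, α τ) ∧ y s ∈ G) →
      IntegrableOn (fun τ => L (y τ) τ + ‖α τ‖ ^ 2 / 2) (Icc a b) volume :=
    fun a b x' y α h1 h2 =>
      aux_traj_integrable e he hinj J hJ G hG ℓ ℓs hℓcont hℓscont L hL hLO M hM hMs x' a b y α h1 h2
  -- the constant trajectory
  have hconst : ∀ (s : ℝ) (z : EuclideanSpace ℝ (Fin d)), z ∈ G →
      ((fun _ : ℝ => z), (fun _ : ℝ => (0 : EuclideanSpace ℝ (Fin d)))) ∈ Γ s z := by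
    intro s z hz
    rw [hΓ]
    refine ⟨MemLp.zero', fun s' _ => ⟨by simp, hz⟩⟩
  have hconstseg : ((fun _ : ℝ => x), (fun _ : ℝ => (0 : EuclideanSpace ℝ (Fin d)))) ∈
      Γseg t tb x := by
    rw [hΓseg]
    refine ⟨MemLp.zero', fun s' _ => ⟨by simp, hx⟩⟩
  -- lower bound for interval integrals of the running cost
  have hIntLB : ∀ (a b : ℝ) (y α : ℝ → EuclideanSpace ℝ (Fin d)), 0 ≤ a → a ≤ b → b ≤ T →
      IntegrableOn (fun τ => L (y τ) τ + ‖α τ‖ ^ 2 / 2) (Icc a b) volume →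
      (∀ τ ∈ Icc a b, y τ ∈ G) →
      -(M * T) ≤ ∫ τ in a..b, (L (y τ) τ + ‖α τ‖ ^ 2 / 2) := by
    intro a b y α ha0 hab hbT hint hyG
    have h1 : (∫ τ in a..b, (-M : ℝ)) ≤ ∫ τ in a..b, (L (y τ) τ + ‖α τ‖ ^ 2 / 2) := by
      apply intervalIntegral.integral_mono_on hab intervalIntegrable_const
        (aux_II hint le_rfl hab le_rfl)
      intro τ hτ
      have h2 := (abs_le.1 (hLbd _ (hyG τ hτ) τ)).1
      have h3 : (0:ℝ) ≤ ‖α τ‖ ^ 2 / 2 := by positivity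
      linarith
    rw [intervalIntegral.integral_const, smul_eq_mul] at h1
    nlinarith
  -- lower bound for the cost functional
  have hJcLB : ∀ (s : ℝ), 0 ≤ s → s ≤ T → ∀ (z : EuclideanSpace ℝ (Fin d)) p, p ∈ Γ s z →
      -(M * T + Mg) ≤ Jc s z p := by
    intro s hs0 hsT z p hp
    rw [hΓ] at hp
    obtain ⟨hp2, hp1⟩ := hp
    have hyat : p.1 s = z + ∫ τ in s..s, p.2 τ := (hp1 s ⟨le_rfl, hsT⟩).1
    have hint := key_int s T z p.1 p.2 hp2 hp1
    have hGt : p.1 T ∈ G := (hp1 T ⟨hsT, le_rfl⟩).2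
    have hgb : -Mg ≤ gT (p.1 T) := (abs_le.1 (hgTbd _ hGt)).1
    have hib := hIntLB s T p.1 p.2 hs0 hsT le_rfl hint (fun τ hτ => (hp1 τ hτ).2)
    rw [hJc]
    linarith
  -- the value function is bounded below, cost sets are bounded below and nonempty
  have hbdd : ∀ (s : ℝ), 0 ≤ s → s ≤ T → ∀ z : EuclideanSpace ℝ (Fin d),
      BddBelow (Jc s z '' Γ s z) := by
    intro s hs0 hsT z
    refine ⟨-(M * T + Mg), ?_⟩
    rintro _ ⟨p, hp, rfl⟩
    exact hJcLB s hs0 hsT z p hp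
  have huLB : ∀ (s : ℝ), 0 ≤ s → s ≤ T → ∀ z ∈ G, -(M * T + Mg) ≤ u z s := by
    intro s hs0 hsT z hz
    rw [hu]
    apply le_csInf ⟨_, Set.mem_image_of_mem _ (hconst s z hz)⟩
    rintro _ ⟨p, hp, rfl⟩
    exact hJcLB s hs0 hsT z p hp
  -- restriction of an admissible trajectory to [tb, T]
  have hrestrict : ∀ p ∈ Γ t x, p ∈ Γ tb (p.1 tb) := by
    intro p hp
    rw [hΓ] at hp ⊢
    obtain ⟨hp2, hp1⟩ := hp
    have hint : IntegrableOn p.2 (Icc t T) volume := aux_int_of t T p.2 hp2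
    refine ⟨hp2.mono_measure (Measure.restrict_mono (Icc_subset_Icc htb1 le_rfl) le_rfl), ?_⟩
    intro s hs
    have hstT : s ∈ Icc t T := ⟨htb1.trans hs.1, hs.2⟩
    refine ⟨?_, (hp1 s hstT).2⟩
    have hadd := intervalIntegral.integral_add_adjacent_intervals
      (aux_II hint le_rfl htb1 htbT) (aux_II hint htb1 hs.1 hs.2)
    rw [(hp1 s hstT).1, (hp1 tb ⟨htb1, htbT⟩).1, ← hadd, add_assoc]
  -- restriction of an admissible trajectory to [t, tb]
  have hseg : ∀ p ∈ Γ t x, p ∈ Γseg t tb x := by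
    intro p hp
    rw [hΓ] at hp
    rw [hΓseg]
    exact ⟨hp.1.mono_measure (Measure.restrict_mono (Icc_subset_Icc le_rfl htbT) le_rfl),
      fun s hs => hp.2 s ⟨hs.1, hs.2.trans htbT⟩⟩
  -- splitting the cost functional
  have hsplit : ∀ p ∈ Γ t x, Jc t x p =
      (∫ τ in t..tb, (L (p.1 τ) τ + ‖p.2 τ‖ ^ 2 / 2)) + Jc tb (p.1 tb) p := by
    intro p hp
    rw [hΓ] at hp
    have hF := key_int t T x p.1 p.2 hp.1 hp.2
    have hadd := intervalIntegral.integral_add_adjacent_intervals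
      (aux_II hF le_rfl htb1 htbT) (aux_II hF htb1 htbT le_rfl)
    rw [hJc, hJc, ← hadd]
    ring
  -- bounded below of the RHS set
  have hSbdd : BddBelow ((fun p : (ℝ → EuclideanSpace ℝ (Fin d)) × (ℝ → EuclideanSpace ℝ (Fin d)) =>
      u (p.1 tb) tb + ∫ τ in t..tb, (L (p.1 τ) τ + ‖p.2 τ‖ ^ 2 / 2)) '' Γseg t tb x) := by
    refine ⟨-(M * T + Mg) + -(M * T), ?_⟩
    rintro _ ⟨q, hq, rfl⟩
    rw [hΓseg] at hq
    have hq1 := hq.2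
    have hzG : q.1 tb ∈ G := (hq1 tb ⟨htb1, le_rfl⟩).2
    have h1 := huLB tb h0tb htbT _ hzG
    have h2 := hIntLB t tb q.1 q.2 h0t htb1 htbT (key_int t tb x q.1 q.2 hq.1 hq1)
      (fun τ hτ => (hq1 τ hτ).2)
    exact add_le_add h1 h2
  apply le_antisymm
  · -- u x t ≤ sInf RHS
    apply le_csInf ⟨_, Set.mem_image_of_mem _ hconstseg⟩
    rintro _ ⟨q, hq, rfl⟩
    simp only
    rw [hΓseg] at hq
    obtain ⟨hq2, hq1⟩ := hq
    apply le_of_forall_pos_le_add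
    intro ε hε
    set z := q.1 tb with hzdef
    have hzG : z ∈ G := (hq1 tb ⟨htb1, le_rfl⟩).2
    have hne : (Jc tb z '' Γ tb z).Nonempty := ⟨_, Set.mem_image_of_mem _ (hconst tb z hzG)⟩
    obtain ⟨c, ⟨p, hp, rfl⟩, hclt⟩ := Real.lt_sInf_add_pos hne hε
    have hpu : Jc tb z p < u z tb + ε := by rw [hu]; exact hclt
    have hpΓ := hp
    rw [hΓ] at hpΓ
    obtain ⟨hp2, hp1⟩ := hpΓ
    -- concatenated trajectory
    set α2 : ℝ → EuclideanSpace ℝ (Fin d) := (Iic tb).piecewise q.2 p.2 with hα2def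
    set y2 : ℝ → EuclideanSpace ℝ (Fin d) := (Iic tb).piecewise q.1 p.1 with hy2def
    have hαq : ∀ τ, τ ≤ tb → α2 τ = q.2 τ := fun τ hτ => Set.piecewise_eq_of_mem _ _ _ hτ
    have hαp : ∀ τ, ¬ τ ≤ tb → α2 τ = p.2 τ := fun τ hτ => Set.piecewise_eq_of_notMem _ _ _ hτ
    have hyq : ∀ τ, τ ≤ tb → y2 τ = q.1 τ := fun τ hτ => Set.piecewise_eq_of_mem _ _ _ hτ
    have hyp : ∀ τ, ¬ τ ≤ tb → y2 τ = p.1 τ := fun τ hτ => Set.piecewise_eq_of_notMem _ _ _ hτ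
    -- Memℒp of the concatenated control
    have hmem2 : MemLp α2 2 (volume.restrict (Icc t T)) := by
      have hrepr : α2 = fun τ => (Iic tb).indicator q.2 τ + (Ioi tb).indicator p.2 τ := by
        funext τ
        by_cases hτ : τ ≤ tb
        · rw [hαq τ hτ, Set.indicator_of_mem (Set.mem_Iic.2 hτ),
            Set.indicator_of_notMem (by simpa using hτ), add_zero]
        · rw [hαp τ hτ, Set.indicator_of_notMem (by simpa using hτ),
            Set.indicator_of_mem (Set.mem_Ioi.2 (lt_of_not_ge hτ)), zero_add]
      rw [hrepr]
      apply MemLp.add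
      · rw [memLp_indicator_iff_restrict measurableSet_Iic,
          Measure.restrict_restrict measurableSet_Iic]
        have hset : Iic tb ∩ Icc t T = Icc t tb := by
          ext τ
          simp only [Set.mem_inter_iff, Set.mem_Iic, Set.mem_Icc]
          constructor
          · rintro ⟨a1, a2, a3⟩; exact ⟨a2, a1⟩
          · rintro ⟨a1, a2⟩; exact ⟨a2, a1, a2.trans htbT⟩
        rw [hset]
        exact hq2
      · rw [memLp_indicator_iff_restrict measurableSet_Ioi,
          Measure.restrict_restrict measurableSet_Ioi]
        refine hp2.mono_measure (Measure.restrict_mono ?_ le_rfl)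
        rintro τ ⟨a1, a2⟩
        exact ⟨le_of_lt a1, a2.2⟩
    have hα2int : IntegrableOn α2 (Icc t T) volume := aux_int_of t T α2 hmem2
    have hq2int : IntegrableOn q.2 (Icc t tb) volume := aux_int_of t tb q.2 hq2
    -- membership of the concatenated trajectory
    have hmemΓ : (y2, α2) ∈ Γ t x := by
      rw [hΓ]
      refine ⟨hmem2, fun s hs => ?_⟩
      by_cases hstb : s ≤ tb
      · have h2 := hq1 s ⟨hs.1, hstb⟩
        refine ⟨?_, by show y2 s ∈ G; rw [hyq s hstb]; exact h2.2⟩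
        show y2 s = x + ∫ τ in t..s, α2 τ
        rw [hyq s hstb, h2.1]
        congr 1
        apply intervalIntegral.integral_congr
        intro τ hτ
        rw [uIcc_of_le hs.1] at hτ
        exact (hαq τ (hτ.2.trans hstb)).symm
      · have hstb' : tb ≤ s := le_of_lt (lt_of_not_ge hstb)
        have h2 := hp1 s ⟨hstb', hs.2⟩
        refine ⟨?_, by show y2 s ∈ G; rw [hyp s hstb]; exact h2.2⟩
        show y2 s = x + ∫ τ in t..s, α2 τ
        rw [hyp s hstb, h2.1]
        have hadd := intervalIntegral.integral_add_adjacent_intervals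
          (aux_II hα2int le_rfl htb1 htbT) (aux_II hα2int htb1 hstb' hs.2)
        rw [← hadd]
        have e1 : (∫ τ in t..tb, α2 τ) = ∫ τ in t..tb, q.2 τ := by
          apply intervalIntegral.integral_congr
          intro τ hτ
          rw [uIcc_of_le htb1] at hτ
          exact hαq τ hτ.2
        have e2 : (∫ τ in tb..s, α2 τ) = ∫ τ in tb..s, p.2 τ := by
          apply intervalIntegral.integral_congr_ae
          apply Filter.Eventually.of_forall
          intro τ hτ
          rw [uIoc_of_le hstb'] at hτ
          exact hαp τ (not_le.2 hτ.1)
        rw [e1, e2, hzdef, (hq1 tb ⟨htb1, le_rfl⟩).1, add_assoc]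
    -- computing the cost of the concatenated trajectory
    have hF2 : IntegrableOn (fun τ => L (y2 τ) τ + ‖α2 τ‖ ^ 2 / 2) (Icc t T) volume := by
      have := hmemΓ
      rw [hΓ] at this
      exact key_int t T x y2 α2 this.1 this.2
    have hsplit2 : (∫ τ in t..T, (L (y2 τ) τ + ‖α2 τ‖ ^ 2 / 2)) =
        (∫ τ in t..tb, (L (y2 τ) τ + ‖α2 τ‖ ^ 2 / 2)) +
        ∫ τ in tb..T, (L (y2 τ) τ + ‖α2 τ‖ ^ 2 / 2) :=
      (intervalIntegral.integral_add_adjacent_intervals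
        (aux_II hF2 le_rfl htb1 htbT) (aux_II hF2 htb1 htbT le_rfl)).symm
    have e3 : (∫ τ in t..tb, (L (y2 τ) τ + ‖α2 τ‖ ^ 2 / 2)) =
        ∫ τ in t..tb, (L (q.1 τ) τ + ‖q.2 τ‖ ^ 2 / 2) := by
      apply intervalIntegral.integral_congr
      intro τ hτ
      rw [uIcc_of_le htb1] at hτ
      simp only [hyq τ hτ.2, hαq τ hτ.2]
    have e4 : (∫ τ in tb..T, (L (y2 τ) τ + ‖α2 τ‖ ^ 2 / 2)) =
        ∫ τ in tb..T, (L (p.1 τ) τ + ‖p.2 τ‖ ^ 2 / 2) := by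
      apply intervalIntegral.integral_congr_ae
      apply Filter.Eventually.of_forall
      intro τ hτ
      rw [uIoc_of_le htbT] at hτ
      simp only [hyp τ (not_le.2 hτ.1), hαp τ (not_le.2 hτ.1)]
    have e5 : y2 T = p.1 T := by
      by_cases hTtb : T ≤ tb
      · have heq : tb = T := le_antisymm htbT hTtb
        have hptb : p.1 tb = z := by
          have := (hp1 tb ⟨le_rfl, htbT⟩).1
          simpa using this
        rw [hyq T hTtb, ← heq, hptb, hzdef]
      · exact hyp T hTtb
    have hcost : Jc t x (y2, α2) =
        (∫ τ in t..tb, (L (q.1 τ) τ + ‖q.2 τ‖ ^ 2 / 2)) + Jc tb z p := by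
      rw [hJc, hJc]
      show (∫ τ in t..T, (L (y2 τ) τ + ‖α2 τ‖ ^ 2 / 2)) + gT (y2 T) = _
      rw [hsplit2, e3, e4, e5]
      ring
    have hle : u x t ≤ Jc t x (y2, α2) := by
      rw [hu]
      exact csInf_le (hbdd t h0t htT x) (Set.mem_image_of_mem _ hmemΓ)
    rw [hcost] at hle
    linarith
  · -- sInf RHS ≤ u x t
    rw [hu]
    apply le_csInf ⟨_, Set.mem_image_of_mem _ (hconst t x hx)⟩
    rintro _ ⟨p, hp, rfl⟩
    have h1 : sInf ((fun p : (ℝ → EuclideanSpace ℝ (Fin d)) × (ℝ → EuclideanSpace ℝ (Fin d)) =>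
        u (p.1 tb) tb + ∫ τ in t..tb, (L (p.1 τ) τ + ‖p.2 τ‖ ^ 2 / 2)) '' Γseg t tb x) ≤
        u (p.1 tb) tb + ∫ τ in t..tb, (L (p.1 τ) τ + ‖p.2 τ‖ ^ 2 / 2) :=
      csInf_le hSbdd (Set.mem_image_of_mem _ (hseg p hp))
    have h2 : u (p.1 tb) tb ≤ Jc tb (p.1 tb) p := by
      rw [hu]
      exact csInf_le (hbdd tb h0tb htbT _) (Set.mem_image_of_mem _ (hrestrict p hp))
    have h3 := hsplit p hp
    linarith
end

section
/- In the two-edge example, optimal trajectories concentrate at the vertex: consider the junction with two edges J₁, J₂ and costs ℓ₁ ≡ −1 on J₁, ℓ₂ ≡ 1 on J₂, vertex cost ℓ_O ≡ −1, and zero terminal costs. Fix x̄ ∈ (0, 1/2] with x̄ ≤ 4T/5 and let (y,α) be an optimal trajectory starting from x̄ e₂ at time 0. Then: (a) once y reaches O it never leaves O (if t₀ = inf{t : y(t) = O} < T then y(t) = O for all t ≥ t₀); and (b) y reaches O before time t_{x̄} = 5x̄/4, i.e., t₀ ≤ 5x̄/4. -/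
open Set MeasureTheory

section helpers

set_option linter.unusedSectionVars false
variable {V : Type*} [NormedAddCommGroup V] [NormedSpace ℝ V] [CompleteSpace V]

lemma my_ae_ne (b : ℝ) : ∀ᵐ τ : ℝ, τ ≠ b := by
  rw [ae_iff]
  have : {τ : ℝ | ¬ τ ≠ b} = {b} := by ext τ; simp
  rw [this]
  exact measure_singleton b

lemma eqOn_Ico_ae {a b : ℝ} {f g : ℝ → V} (h : ∀ τ ∈ Ico a b, f τ = g τ) :
    f =ᵐ[volume.restrict (Ioc a b)] g := by
  filter_upwards [ae_restrict_of_ae (my_ae_ne b), ae_restrict_mem measurableSet_Ioc] with τ h1 h2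
  exact h τ ⟨h2.1.le, lt_of_le_of_ne h2.2 h1⟩

lemma II_congr_Ico {a b : ℝ} (hab : a ≤ b) {f g : ℝ → V}
    (h : ∀ τ ∈ Ico a b, f τ = g τ) (hg : IntervalIntegrable g volume a b) :
    IntervalIntegrable f volume a b := by
  rw [intervalIntegrable_iff_integrableOn_Ioc_of_le hab] at hg ⊢
  exact hg.congr (eqOn_Ico_ae h).symm

lemma II_of_eqOn_Ico {a b : ℝ} (hab : a ≤ b) {f : ℝ → V} {c : V}
    (h : ∀ τ ∈ Ico a b, f τ = c) : IntervalIntegrable f volume a b := by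
  refine II_congr_Ico hab h ?_
  exact intervalIntegrable_const

lemma intg_congr_Ico {a b : ℝ} (hab : a ≤ b) {f g : ℝ → V}
    (h : ∀ τ ∈ Ico a b, f τ = g τ) :
    (∫ τ in a..b, f τ) = ∫ τ in a..b, g τ := by
  apply intervalIntegral.integral_congr_ae
  filter_upwards [my_ae_ne b] with τ h1 h2
  rw [uIoc_of_le hab] at h2
  exact h τ ⟨h2.1.le, lt_of_le_of_ne h2.2 h1⟩

lemma intg_of_eqOn_Ico {a b : ℝ} (hab : a ≤ b) {f : ℝ → V} {c : V}
    (h : ∀ τ ∈ Ico a b, f τ = c) : (∫ τ in a..b, f τ) = (b - a) • c := by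
  rw [intg_congr_Ico hab h, intervalIntegral.integral_const]

lemma ray_isClosed {E : Type*} [NormedAddCommGroup E] [InnerProductSpace ℝ E] {e : E}
    (he : ‖e‖ = 1) : IsClosed {p : E | ∃ r : ℝ, 0 ≤ r ∧ p = r • e} := by
  have hset : {p : E | ∃ r : ℝ, 0 ≤ r ∧ p = r • e} =
      {p : E | (inner ℝ p e : ℝ) • e = p} ∩ {p : E | (0:ℝ) ≤ inner ℝ p e} := by
    ext p
    constructor
    · rintro ⟨r, hr, rfl⟩
      have h1 : (inner ℝ (r • e) e : ℝ) = r := by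
        rw [real_inner_smul_left, real_inner_self_eq_norm_sq, he]; ring
      constructor
      · show (inner ℝ (r • e) e : ℝ) • e = r • e
        rw [h1]
      · show (0:ℝ) ≤ inner ℝ (r • e) e
        rw [h1]; exact hr
    · rintro ⟨h1, h2⟩
      exact ⟨inner ℝ p e, h2, h1.symm⟩
  rw [hset]
  have hc : Continuous fun p : E => (inner ℝ p e : ℝ) :=
    continuous_id.inner continuous_const
  exact (isClosed_eq (hc.smul continuous_const) continuous_id).inter
    (isClosed_le continuous_const hc)

lemma ray_inter {E : Type*} [NormedAddCommGroup E] [NormedSpace ℝ E] {e₀ e₁ : E}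
    (h0 : ‖e₀‖ = 1) (h1 : ‖e₁‖ = 1) (hne : e₀ ≠ e₁) {p : E}
    (hp0 : ∃ r : ℝ, 0 ≤ r ∧ p = r • e₀) (hp1 : ∃ r : ℝ, 0 ≤ r ∧ p = r • e₁) : p = 0 := by
  obtain ⟨r, hr, rfl⟩ := hp0
  obtain ⟨r', hr', he⟩ := hp1
  have hrr : r = r' := by
    have h2 := congrArg norm he
    rw [norm_smul, norm_smul, h0, h1, mul_one, mul_one, Real.norm_eq_abs, Real.norm_eq_abs,
      abs_of_nonneg hr, abs_of_nonneg hr'] at h2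
    exact h2
  rcases eq_or_lt_of_le hr with h | h
  · rw [← h, zero_smul]
  · subst hrr
    exact absurd (smul_right_injective E h.ne' he) hne

end helpers

set_option maxHeartbeats 1000000 in
/-- In the two-edge example with `ℓ₁ ≡ −1`, `ℓ₂ ≡ 1`, vertex cost `−1` and zero
terminal costs, an optimal trajectory starting from `x̄ e₂` (with `0 < x̄ ≤ 1/2`,
`x̄ ≤ 4T/5`) (a) never leaves the vertex once it reaches it, and (b) reaches the
vertex before time `5x̄/4`. -/
theorem stmt_19 {d : ℕ} (T : ℝ) (hT : 0 < T)
    (e : Fin 2 → EuclideanSpace ℝ (Fin d))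
    (he : ∀ i, ‖e i‖ = 1) (hinj : Function.Injective e)
    (J : Fin 2 → Set (EuclideanSpace ℝ (Fin d)))
    (hJ : ∀ i, J i = {p | ∃ r : ℝ, 0 ≤ r ∧ p = r • e i})
    (G : Set (EuclideanSpace ℝ (Fin d)))
    (hG : G = ⋃ i, J i)
    -- running cost: `−1` on the first edge (and at the vertex), `+1` on the second
    (L : EuclideanSpace ℝ (Fin d) → ℝ)
    (hL1 : ∀ x ∈ J 0, L x = -1)
    (hL2 : ∀ x ∈ J 1 \ {0}, L x = 1)
    -- initial point on the second edge
    (xb : ℝ) (hxb0 : 0 < xb) (hxb1 : xb ≤ 1 / 2) (hxbT : xb ≤ 4 * T / 5)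
    -- admissible trajectories from `x` and the cost
    (Γ : EuclideanSpace ℝ (Fin d) →
      Set ((ℝ → EuclideanSpace ℝ (Fin d)) × (ℝ → EuclideanSpace ℝ (Fin d))))
    (hΓ : ∀ x, Γ x = {p | MemLp p.2 2 (volume.restrict (Icc (0 : ℝ) T)) ∧
        ∀ s ∈ Icc (0 : ℝ) T, (p.1 s = x + ∫ τ in (0 : ℝ)..s, p.2 τ) ∧ p.1 s ∈ G})
    (Jc : ((ℝ → EuclideanSpace ℝ (Fin d)) × (ℝ → EuclideanSpace ℝ (Fin d))) → ℝ)
    (hJc : ∀ p, Jc p = ∫ τ in (0 : ℝ)..T, (L (p.1 τ) + ‖p.2 τ‖ ^ 2 / 2))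
    -- an optimal trajectory starting from `x̄ e₂`
    (y α : ℝ → EuclideanSpace ℝ (Fin d))
    (hopt : (y, α) ∈ Γ (xb • e 1) ∧ ∀ p ∈ Γ (xb • e 1), Jc (y, α) ≤ Jc p) :
    (∀ t ∈ Icc (0 : ℝ) T, y t = 0 → ∀ s ∈ Icc t T, y s = 0) ∧
    ∃ t ∈ Icc (0 : ℝ) (5 * xb / 4), y t = 0 := by
  obtain ⟨hmem, hmin⟩ := hopt
  rw [hΓ] at hmem
  obtain ⟨hα2, hy⟩ := hmem
  have hxbT' : xb ≤ T := by linarith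
  set X : EuclideanSpace ℝ (Fin d) := xb • e 1 with hX
  -- basic facts about the junction
  have h0J : ∀ i, (0 : EuclideanSpace ℝ (Fin d)) ∈ J i := fun i => by
    rw [hJ]; exact ⟨0, le_rfl, (zero_smul ℝ _).symm⟩
  have h0G : (0 : EuclideanSpace ℝ (Fin d)) ∈ G := by
    rw [hG]; exact mem_iUnion.mpr ⟨0, h0J 0⟩
  have hL0 : L 0 = -1 := hL1 0 (h0J 0)
  have hJcl : ∀ i, IsClosed (J i) := fun i => by rw [hJ]; exact ray_isClosed (he i)
  have hne : e 0 ≠ e 1 := fun h => by simpa using hinj h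
  have hJJ : ∀ p, p ∈ J 0 → p ∈ J 1 → p = 0 := by
    intro p h0 h1
    rw [hJ 0] at h0; rw [hJ 1] at h1
    exact ray_inter (he 0) (he 1) hne h0 h1
  have hJ1mem : ∀ r : ℝ, 0 ≤ r → r • e 1 ∈ J 1 := fun r hr => by
    rw [hJ]; exact ⟨r, hr, rfl⟩
  have hGJ : ∀ i, J i ⊆ G := fun i => by rw [hG]; exact subset_iUnion J i
  have hGdecomp : ∀ p ∈ G, p ∈ J 1 \ {0} ∨ p ∈ J 0 := by
    intro p hp
    rw [hG, mem_iUnion] at hp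
    obtain ⟨i, hi⟩ := hp
    fin_cases i
    · exact Or.inr hi
    · by_cases h0 : p = 0
      · exact Or.inr (h0 ▸ h0J 0)
      · exact Or.inl ⟨hi, h0⟩
  have hLlb : ∀ p ∈ G, -1 ≤ L p := by
    intro p hp
    rcases hGdecomp p hp with h | h
    · rw [hL2 p h]; norm_num
    · rw [hL1 p h]
  -- integrability of α
  have hαInt : IntegrableOn α (Icc 0 T) := hα2.integrable one_le_two
  have hαii : ∀ {a b : ℝ}, 0 ≤ a → b ≤ T → a ≤ b → IntervalIntegrable α volume a b := by
    intro a b ha hb hab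
    rw [intervalIntegrable_iff_integrableOn_Ioc_of_le hab]
    exact hαInt.mono_set fun τ hτ => ⟨ha.trans hτ.1.le, hτ.2.trans hb⟩
  -- basic facts about y
  have hyf : ∀ s ∈ Icc (0:ℝ) T, y s = X + ∫ τ in (0:ℝ)..s, α τ := fun s hs => (hy s hs).1
  have hyG : ∀ s ∈ Icc (0:ℝ) T, y s ∈ G := fun s hs => (hy s hs).2
  have hy0 : y 0 = X := by
    rw [hyf 0 ⟨le_rfl, hT.le⟩, intervalIntegral.integral_same, add_zero]
  have hycont : ContinuousOn y (Icc 0 T) := by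
    have h1 : ContinuousOn (fun s => X + ∫ τ in Ioc 0 s, α τ) (Icc 0 T) :=
      continuousOn_const.add (intervalIntegral.continuousOn_primitive hαInt)
    apply h1.congr
    intro s hs
    rw [hyf s hs, intervalIntegral.integral_of_le hs.1]
  -- the integrand
  set F : ℝ → ℝ := fun τ => L (y τ) + ‖α τ‖ ^ 2 / 2 with hF
  have hB1 : IsClosed (Icc 0 T ∩ y ⁻¹' (J 1)) :=
    hycont.preimage_isClosed_of_isClosed isClosed_Icc (hJcl 1)
  have hB0 : IsClosed (Icc 0 T ∩ y ⁻¹' {0}) :=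
    hycont.preimage_isClosed_of_isClosed isClosed_Icc isClosed_singleton
  set B : Set ℝ := (Icc 0 T ∩ y ⁻¹' (J 1)) \ (Icc 0 T ∩ y ⁻¹' {0}) with hBdef
  have hBmeas : MeasurableSet B := hB1.measurableSet.diff hB0.measurableSet
  have hLy_eqB : ∀ τ ∈ Icc (0:ℝ) T, L (y τ) = B.indicator (fun _ => (2:ℝ)) τ - 1 := by
    intro τ hτ
    rcases hGdecomp _ (hyG τ hτ) with h | h
    · rw [hL2 _ h, indicator_of_mem (show τ ∈ B from ⟨⟨hτ, h.1⟩, fun hc => h.2 hc.2⟩) _]; norm_num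
    · rw [hL1 _ h, indicator_of_notMem]
      · norm_num
      · rintro ⟨⟨-, hmem1⟩, hne0⟩
        exact hne0 ⟨hτ, hJJ _ h hmem1⟩
  have hLyInt : IntegrableOn (fun τ => L (y τ)) (Icc 0 T) := by
    have h1 : IntegrableOn (fun τ => B.indicator (fun _ => (2:ℝ)) τ - 1) (Icc 0 T) :=
      ((integrable_const (2:ℝ)).indicator hBmeas).sub (integrable_const 1)
    refine h1.congr ?_
    filter_upwards [ae_restrict_mem measurableSet_Icc] with τ hτ
    exact (hLy_eqB τ hτ).symm
  have hαsqInt : IntegrableOn (fun τ => ‖α τ‖ ^ 2) (Icc 0 T) := by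
    have h1 := hα2.integrable_norm_rpow two_ne_zero ENNReal.ofNat_ne_top
    refine h1.congr ?_
    refine Filter.Eventually.of_forall fun τ => ?_
    show ‖α τ‖ ^ ((2:ENNReal).toReal) = ‖α τ‖ ^ 2
    rw [ENNReal.toReal_ofNat, ← Real.rpow_natCast]
    norm_num
  have hFInt : IntegrableOn F (Icc 0 T) := hLyInt.add (hαsqInt.div_const 2)
  have hFii : ∀ {a b : ℝ}, 0 ≤ a → b ≤ T → a ≤ b → IntervalIntegrable F volume a b := by
    intro a b ha hb hab
    rw [intervalIntegrable_iff_integrableOn_Ioc_of_le hab]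
    exact hFInt.mono_set fun τ hτ => ⟨ha.trans hτ.1.le, hτ.2.trans hb⟩
  have hFlb : ∀ τ ∈ Icc (0:ℝ) T, -1 ≤ F τ := by
    intro τ hτ
    have h1 := hLlb _ (hyG τ hτ)
    have h2 : (0:ℝ) ≤ ‖α τ‖ ^ 2 / 2 := by positivity
    show -1 ≤ L (y τ) + ‖α τ‖ ^ 2 / 2
    linarith
  have hlow : ∀ {a b : ℝ}, 0 ≤ a → b ≤ T → a ≤ b → -(b - a) ≤ ∫ τ in a..b, F τ := by
    intro a b ha hb hab
    have h1 := intervalIntegral.integral_mono_on (f := fun _ => (-1:ℝ)) hab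
      intervalIntegrable_const (hFii ha hb hab)
      (fun τ hτ => hFlb τ ⟨ha.trans hτ.1, hτ.2.trans hb⟩)
    rw [intervalIntegral.integral_const, smul_eq_mul] at h1
    linarith
  constructor
  · -- part (a): once at the vertex, stay there
    intro t ht hyt s hs
    have htT : t ≤ T := ht.2
    have ht0 : (0:ℝ) ≤ t := ht.1
    set β : ℝ → EuclideanSpace ℝ (Fin d) := (Iio t).indicator α with hβ
    have hβIntOn : IntegrableOn β (Icc 0 T) := hαInt.indicator measurableSet_Iio
    have hβval1 : ∀ τ, τ < t → β τ = α τ := fun τ h => by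
      rw [hβ]; exact indicator_of_mem (mem_Iio.mpr h) α
    have hβval2 : ∀ τ, t ≤ τ → β τ = 0 := fun τ h => by
      rw [hβ]; exact indicator_of_notMem (fun hm => not_lt.mpr h (mem_Iio.mp hm)) α
    have hβii : ∀ {a b : ℝ}, 0 ≤ a → b ≤ T → a ≤ b → IntervalIntegrable β volume a b := by
      intro a b ha hb hab
      rw [intervalIntegrable_iff_integrableOn_Ioc_of_le hab]
      exact hβIntOn.mono_set fun τ hτ => ⟨ha.trans hτ.1.le, hτ.2.trans hb⟩
    have hβeq1 : ∀ s', 0 ≤ s' → s' ≤ t → (∫ τ in (0:ℝ)..s', β τ) = ∫ τ in (0:ℝ)..s', α τ := by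
      intro s' h0 h1
      exact intg_congr_Ico h0 fun τ hτ => hβval1 τ (lt_of_lt_of_le hτ.2 h1)
    have hβeq2 : ∀ s', t ≤ s' → s' ≤ T → (∫ τ in (0:ℝ)..s', β τ) = ∫ τ in (0:ℝ)..t, α τ := by
      intro s' h1 h2
      rw [← intervalIntegral.integral_add_adjacent_intervals (hβii le_rfl htT ht0)
        (hβii ht0 h2 h1), hβeq1 t ht0 le_rfl]
      have hz : (∫ τ in t..s', β τ) = 0 := by
        rw [intervalIntegral.integral_congr (g := fun _ => (0:EuclideanSpace ℝ (Fin d)))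
          (fun τ hτ => by
            rw [uIcc_of_le h1] at hτ
            exact hβval2 τ hτ.1),
          intervalIntegral.integral_zero]
      rw [hz, add_zero]
    set Y : ℝ → EuclideanSpace ℝ (Fin d) := fun s' => X + ∫ τ in (0:ℝ)..s', β τ with hYd
    have hYeq : ∀ s' ∈ Icc (0:ℝ) t, Y s' = y s' := by
      intro s' hs'
      show X + _ = y s'
      rw [hβeq1 s' hs'.1 hs'.2, ← hyf s' ⟨hs'.1, hs'.2.trans htT⟩]
    have hY0 : ∀ s' ∈ Icc t T, Y s' = 0 := by
      intro s' hs'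
      show X + _ = 0
      rw [hβeq2 s' hs'.1 hs'.2, ← hyf t ht, hyt]
    have hYΓ : (Y, β) ∈ Γ X := by
      rw [hΓ]
      refine ⟨hα2.indicator measurableSet_Iio, fun s' hs' => ⟨rfl, ?_⟩⟩
      show Y s' ∈ G
      rcases le_total s' t with hcase | hcase
      · rw [hYeq s' ⟨hs'.1, hcase⟩]; exact hyG s' hs'
      · rw [hY0 s' ⟨hcase, hs'.2⟩]; exact h0G
    have hJyy : Jc (y, α) = (∫ τ in (0:ℝ)..t, F τ) + ∫ τ in t..T, F τ := by
      rw [hJc]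
      exact (intervalIntegral.integral_add_adjacent_intervals (hFii le_rfl htT ht0)
        (hFii ht0 le_rfl htT)).symm
    have hJYY : Jc (Y, β) = (∫ τ in (0:ℝ)..t, F τ) - (T - t) := by
      rw [hJc]
      show (∫ τ in (0:ℝ)..T, (L (Y τ) + ‖β τ‖ ^ 2 / 2)) = (∫ τ in (0:ℝ)..t, F τ) - (T - t)
      have hagree : ∀ τ ∈ Ico (0:ℝ) t, L (Y τ) + ‖β τ‖ ^ 2 / 2 = F τ := by
        intro τ hτ
        show _ = L (y τ) + ‖α τ‖ ^ 2 / 2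
        rw [hYeq τ ⟨hτ.1, hτ.2.le⟩, hβval1 τ hτ.2]
      have hc2 : ∀ τ ∈ Ico t T, L (Y τ) + ‖β τ‖ ^ 2 / 2 = (-1:ℝ) := by
        intro τ hτ
        rw [hY0 τ ⟨hτ.1, hτ.2.le⟩, hβval2 τ hτ.1, hL0]
        simp
      have hsplit1 : IntervalIntegrable (fun τ => L (Y τ) + ‖β τ‖ ^ 2 / 2) volume 0 t :=
        II_congr_Ico ht0 hagree (hFii le_rfl htT ht0)
      have hsplit2 : IntervalIntegrable (fun τ => L (Y τ) + ‖β τ‖ ^ 2 / 2) volume t T :=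
        II_of_eqOn_Ico htT hc2
      rw [← intervalIntegral.integral_add_adjacent_intervals hsplit1 hsplit2,
        intg_congr_Ico ht0 hagree, intg_of_eqOn_Ico htT hc2, smul_eq_mul]
      ring
    have hkey := hmin (Y, β) hYΓ
    rw [hJyy, hJYY] at hkey
    have hIIsq : IntervalIntegrable (fun τ => ‖α τ‖ ^ 2 / 2) volume t T := by
      rw [intervalIntegrable_iff_integrableOn_Ioc_of_le htT]
      exact (hαsqInt.mono_set fun τ hτ => ⟨ht0.trans hτ.1.le, hτ.2⟩).div_const 2
    have h6 := intervalIntegral.integral_mono_on (f := fun τ => -1 + ‖α τ‖ ^ 2 / 2) htT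
      (intervalIntegrable_const.add hIIsq) (hFii ht0 le_rfl htT)
      (fun τ hτ => by
        have h1 := hLlb _ (hyG τ ⟨ht0.trans hτ.1, hτ.2⟩)
        show -1 + ‖α τ‖ ^ 2 / 2 ≤ L (y τ) + ‖α τ‖ ^ 2 / 2
        linarith)
    rw [intervalIntegral.integral_add intervalIntegrable_const hIIsq,
      intervalIntegral.integral_const, smul_eq_mul] at h6
    have h7 : (∫ τ in t..T, ‖α τ‖ ^ 2 / 2) ≤ 0 := by linarith
    have hintOn : IntegrableOn (fun τ => ‖α τ‖ ^ 2) (Ioc t T) :=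
      hαsqInt.mono_set fun τ hτ => ⟨ht0.trans hτ.1.le, hτ.2⟩
    have h8 : (∫ τ in Ioc t T, ‖α τ‖ ^ 2) = 0 := by
      have hnn : 0 ≤ ∫ τ in Ioc t T, ‖α τ‖ ^ 2 :=
        setIntegral_nonneg measurableSet_Ioc fun τ _ => by positivity
      have h7' : (∫ τ in Ioc t T, ‖α τ‖ ^ 2 / 2) ≤ 0 := by
        rwa [intervalIntegral.integral_of_le htT] at h7
      rw [integral_div] at h7'
      linarith
    have h9 : α =ᵐ[volume.restrict (Ioc t T)] 0 := by
      have h10 := (integral_eq_zero_iff_of_nonneg (fun τ => by positivity) hintOn).mp h8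
      filter_upwards [h10] with τ hτ
      have h11 : ‖α τ‖ ^ 2 = 0 := hτ
      have h12 : ‖α τ‖ = 0 := by
        nlinarith [norm_nonneg (α τ)]
      simpa using norm_eq_zero.mp h12
    have h11 : (∫ τ in t..s, α τ) = 0 := by
      rw [intervalIntegral.integral_of_le hs.1]
      exact integral_eq_zero_of_ae
        (ae_restrict_of_ae_restrict_of_subset (Ioc_subset_Ioc_right hs.2) h9)
    have h12 : y s = y t + ∫ τ in t..s, α τ := by
      rw [hyf s ⟨ht0.trans hs.1, hs.2⟩, hyf t ht,
        ← intervalIntegral.integral_add_adjacent_intervals (hαii le_rfl htT ht0)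
          (hαii ht0 hs.2 hs.1), add_assoc]
    rw [h12, hyt, h11, add_zero]
  · -- part (b): the vertex is reached before 5 xb / 4
    by_contra hcon
    push_neg at hcon
    set t₁ : ℝ := 5 * xb / 4 with ht₁
    have ht₁0 : (0:ℝ) ≤ t₁ := by positivity
    have ht₁T : t₁ ≤ T := by rw [ht₁]; linarith
    have hsub : Icc (0:ℝ) t₁ ⊆ Icc 0 T := Icc_subset_Icc le_rfl ht₁T
    have hyJ1 : ∀ τ ∈ Icc (0:ℝ) t₁, y τ ∈ J 1 \ {0} := by
      intro τ hτ
      refine ⟨?_, hcon τ hτ⟩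
      by_contra hτJ1
      have hτJ0 : y τ ∈ J 0 := by
        rcases hGdecomp _ (hyG τ (hsub hτ)) with h | h
        · exact absurd h.1 hτJ1
        · exact h
      have hcover : Icc (0:ℝ) t₁ ⊆ (Icc 0 T ∩ y ⁻¹' (J 0)) ∪ (Icc 0 T ∩ y ⁻¹' (J 1)) := by
        intro τ' hτ'
        rcases hGdecomp _ (hyG τ' (hsub hτ')) with h | h
        · exact Or.inr ⟨hsub hτ', h.1⟩
        · exact Or.inl ⟨hsub hτ', h⟩
      have hC0 : IsClosed (Icc 0 T ∩ y ⁻¹' (J 0)) :=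
        hycont.preimage_isClosed_of_isClosed isClosed_Icc (hJcl 0)
      obtain ⟨τ', hτ'I, hτ'0, hτ'1⟩ :=
        isPreconnected_closed_iff.mp isPreconnected_Icc _ _ hC0 hB1 hcover
          ⟨τ, hτ, hsub hτ, hτJ0⟩
          ⟨0, ⟨le_rfl, ht₁0⟩, ⟨le_rfl, hT.le⟩, by
            rw [mem_preimage, hy0]; exact hJ1mem xb hxb0.le⟩
      exact hcon τ' hτ'I (hJJ _ hτ'0.2 hτ'1.2)
    have hFge1 : ∀ τ ∈ Icc (0:ℝ) t₁, (1:ℝ) ≤ F τ := by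
      intro τ hτ
      have h1 : L (y τ) = 1 := hL2 _ (hyJ1 τ hτ)
      show (1:ℝ) ≤ L (y τ) + ‖α τ‖ ^ 2 / 2
      have h2 : (0:ℝ) ≤ ‖α τ‖ ^ 2 / 2 := by positivity
      linarith
    have hlow1 : t₁ ≤ ∫ τ in (0:ℝ)..t₁, F τ := by
      have h1 := intervalIntegral.integral_mono_on (f := fun _ => (1:ℝ)) ht₁0
        intervalIntegrable_const (hFii le_rfl ht₁T ht₁0) hFge1
      rw [intervalIntegral.integral_const, smul_eq_mul] at h1
      linarith
    have hJylb : 2 * t₁ - T ≤ Jc (y, α) := by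
      rw [hJc]
      show 2 * t₁ - T ≤ ∫ τ in (0:ℝ)..T, F τ
      rw [← intervalIntegral.integral_add_adjacent_intervals (hFii le_rfl ht₁T ht₁0)
        (hFii ht₁0 le_rfl ht₁T)]
      have h2 := hlow ht₁0 le_rfl ht₁T
      linarith
    -- comparison trajectory going to the vertex at speed 2 and stopping there
    set c : ℝ := xb / 2 with hc
    have hc0 : (0:ℝ) ≤ c := by positivity
    have hcT : c ≤ T := by rw [hc]; linarith
    set a2 : EuclideanSpace ℝ (Fin d) := (-2 : ℝ) • e 1 with ha2
    set β : ℝ → EuclideanSpace ℝ (Fin d) := (Ico (0:ℝ) c).indicator (fun _ => a2) with hβ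
    have hβv1 : ∀ τ ∈ Ico (0:ℝ) c, β τ = a2 := fun τ hτ => by
      rw [hβ]; exact indicator_of_mem hτ _
    have hβz : ∀ τ, c ≤ τ → β τ = 0 := fun τ hτ => by
      rw [hβ]; exact indicator_of_notMem (fun hm => absurd hm.2 (not_lt.mpr hτ)) _
    have hβII1 : IntervalIntegrable β volume 0 c :=
      II_of_eqOn_Ico hc0 hβv1
    have hβint1 : ∀ s, 0 ≤ s → s ≤ c → (∫ τ in (0:ℝ)..s, β τ) = s • a2 := by
      intro s h0 h1
      have h2 := intg_of_eqOn_Ico h0 (f := β) (c := a2)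
        (fun τ hτ => hβv1 τ ⟨hτ.1, lt_of_lt_of_le hτ.2 h1⟩)
      rw [h2, sub_zero]
    have hβint2 : ∀ s, c ≤ s → (∫ τ in (0:ℝ)..s, β τ) = c • a2 := by
      intro s h1
      have hII2 : IntervalIntegrable β volume c s :=
        II_of_eqOn_Ico h1 (c := (0:EuclideanSpace ℝ (Fin d))) fun τ hτ => hβz τ hτ.1
      rw [← intervalIntegral.integral_add_adjacent_intervals hβII1 hII2, hβint1 c hc0 le_rfl]
      have hz : (∫ τ in c..s, β τ) = 0 := by
        rw [intg_of_eqOn_Ico h1 (f := β) (c := (0:EuclideanSpace ℝ (Fin d)))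
          fun τ hτ => hβz τ hτ.1, smul_zero]
      rw [hz, add_zero]
    set Y : ℝ → EuclideanSpace ℝ (Fin d) := fun s => X + ∫ τ in (0:ℝ)..s, β τ with hYd
    have hYval1 : ∀ s, 0 ≤ s → s ≤ c → Y s = (xb - 2*s) • e 1 := by
      intro s h0 h1
      show X + _ = _
      rw [hβint1 s h0 h1, hX, ha2, smul_smul, ← add_smul]
      congr 1
      ring
    have hYval2 : ∀ s, c ≤ s → Y s = 0 := by
      intro s h1
      show X + _ = 0
      rw [hβint2 s h1, hX, ha2, smul_smul, ← add_smul]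
      have h2 : xb + c * (-2) = 0 := by rw [hc]; ring
      rw [h2, zero_smul]
    have hYΓ : (Y, β) ∈ Γ X := by
      rw [hΓ]
      refine ⟨(memLp_const a2).indicator measurableSet_Ico, fun s hs => ⟨rfl, ?_⟩⟩
      show Y s ∈ G
      rcases le_total s c with hcase | hcase
      · rw [hYval1 s hs.1 hcase]
        exact hGJ 1 (hJ1mem _ (by rw [hc] at hcase; linarith))
      · rw [hYval2 s hcase]
        exact h0G
    have hnrm : ‖a2‖ = 2 := by
      rw [ha2, norm_smul, he 1, mul_one]
      norm_num
    have he1ne : e 1 ≠ 0 := by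
      intro h
      have h2 := he 1
      rw [h, norm_zero] at h2
      norm_num at h2
    have hc1 : ∀ τ ∈ Ico (0:ℝ) c, L (Y τ) + ‖β τ‖ ^ 2 / 2 = (3:ℝ) := by
      intro τ hτ
      have h1 : Y τ = (xb - 2*τ) • e 1 := hYval1 τ hτ.1 hτ.2.le
      have h2 : β τ = a2 := hβv1 τ hτ
      have h3 : (0:ℝ) < xb - 2*τ := by
        have h4 := hτ.2
        rw [hc] at h4
        linarith
      have h4 : Y τ ∈ J 1 \ {0} :=
        ⟨by rw [h1]; exact hJ1mem _ h3.le, by rw [h1]; exact smul_ne_zero h3.ne' he1ne⟩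
      rw [hL2 _ h4, h2, hnrm]
      norm_num
    have hc2 : ∀ τ ∈ Ico c T, L (Y τ) + ‖β τ‖ ^ 2 / 2 = (-1:ℝ) := by
      intro τ hτ
      rw [hYval2 τ hτ.1, hβz τ hτ.1, hL0]
      simp
    have hJYub : Jc (Y, β) = 2 * xb - T := by
      rw [hJc]
      show (∫ τ in (0:ℝ)..T, (L (Y τ) + ‖β τ‖ ^ 2 / 2)) = 2 * xb - T
      rw [← intervalIntegral.integral_add_adjacent_intervals (b := c)
        (II_of_eqOn_Ico hc0 (f := fun τ => L (Y τ) + ‖β τ‖ ^ 2 / 2) hc1)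
        (II_of_eqOn_Ico hcT (f := fun τ => L (Y τ) + ‖β τ‖ ^ 2 / 2) hc2),
        intg_of_eqOn_Ico hc0 hc1, intg_of_eqOn_Ico hcT hc2, smul_eq_mul, smul_eq_mul, hc]
      ring
    have hkey := hmin (Y, β) hYΓ
    rw [hJYub] at hkey
    rw [ht₁] at hJylb
    linarith
end
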